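/- arXiv:2403.18534 — 3 statements merged into one kernel-verified Lean document; each statement's English description precedes it below -/
import Mathlib

section
/- Let t ≥ 4 and let K_{t,t}^− be the complete bipartite graph K_{t,t} minus one edge. In the unbiased Waiter-Client game in which Waiter offers only edges of K_{t,t}^−, Waiter has a strategy to force Client's graph to contain a perfect matching of K_{t,t} (using only edges of K_{t,t}^−) within t+1 rounds. -/
open scoped Classical

/-- `WaiterForcesIn goal r free client`: unbiased Waiter-Client game, Waiter can
force `goal client free` within at most `r` rounds. -/
inductive WaiterForcesIn {α : Type*} [DecidableEq α]
    (goal : Finset α → Finset α → Prop) : ℕ → Finset α → Finset α → Prop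
  | win {r : ℕ} {free client : Finset α} :
      goal client free → WaiterForcesIn goal r free client
  | offer {r : ℕ} {free client : Finset α} (e₁ e₂ : α)
      (h₁ : e₁ ∈ free) (h₂ : e₂ ∈ free) (hne : e₁ ≠ e₂)
      (hc₁ : WaiterForcesIn goal r (free \ {e₁, e₂}) (insert e₁ client))
      (hc₂ : WaiterForcesIn goal r (free \ {e₁, e₂}) (insert e₂ client)) :
      WaiterForcesIn goal (r + 1) free client

variable {t : ℕ}

def stmt6_edg (a b : Fin t) : Sym2 (Fin t ⊕ Fin t) := s(Sum.inl a, Sum.inr b)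

lemma edg_eq6 {a b c d : Fin t} : stmt6_edg a b = stmt6_edg c d ↔ a = c ∧ b = d := by
  constructor
  · intro h
    rw [stmt6_edg, stmt6_edg, Sym2.eq_iff] at h
    rcases h with ⟨h1, h2⟩ | ⟨h1, h2⟩
    · exact ⟨Sum.inl.inj h1, Sum.inr.inj h2⟩
    · exact absurd h1 (by simp)
  · rintro ⟨rfl, rfl⟩; rfl

lemma stmt6_inl_mem_edg {a c d : Fin t} : Sum.inl a ∈ stmt6_edg c d ↔ a = c := by
  simp [stmt6_edg]

lemma stmt6_inr_mem_edg {b c d : Fin t} : Sum.inr b ∈ stmt6_edg c d ↔ b = d := by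
  simp [stmt6_edg]

def stmt6_PMgoal (t : ℕ) : Finset (Sym2 (Fin t ⊕ Fin t)) → Finset (Sym2 (Fin t ⊕ Fin t)) → Prop :=
  fun client _free =>
    ∃ M : Finset (Sym2 (Fin t ⊕ Fin t)), M ⊆ client ∧
      ∀ v : Fin t ⊕ Fin t, (M.filter (fun e => v ∈ e)).card = 1

lemma stmt6_win_of {client free : Finset (Sym2 (Fin t ⊕ Fin t))} (m : Fin t → Fin t)
    (hinj : Function.Injective m) (hcl : ∀ a, stmt6_edg a (m a) ∈ client) :
    stmt6_PMgoal t client free := by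
  classical
  have hsurj : Function.Surjective m := Finite.surjective_of_injective hinj
  refine ⟨Finset.univ.image (fun a => stmt6_edg a (m a)), ?_, ?_⟩
  · intro e he
    rcases Finset.mem_image.1 he with ⟨a, -, rfl⟩
    exact hcl a
  · intro v
    rw [Finset.card_eq_one]
    rcases v with a | b
    · refine ⟨stmt6_edg a (m a), ?_⟩
      ext e
      simp only [Finset.mem_filter, Finset.mem_image, Finset.mem_singleton]
      constructor
      · rintro ⟨⟨c, -, rfl⟩, hm⟩
        rw [stmt6_inl_mem_edg] at hm
        subst hm; rfl
      · rintro rfl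
        exact ⟨⟨a, Finset.mem_univ a, rfl⟩, by rw [stmt6_inl_mem_edg]⟩
    · rcases hsurj b with ⟨c, rfl⟩
      refine ⟨stmt6_edg c (m c), ?_⟩
      ext e
      simp only [Finset.mem_filter, Finset.mem_image, Finset.mem_singleton]
      constructor
      · rintro ⟨⟨d, -, rfl⟩, hm⟩
        rw [stmt6_inr_mem_edg] at hm
        have := hinj hm
        subst this; rfl
      · rintro rfl
        exact ⟨⟨c, Finset.mem_univ c, rfl⟩, by rw [stmt6_inr_mem_edg]⟩

/-- Last round: unmatched left `x'`, unmatched right `q`; `m` matches everyone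
else; client additionally owns the edge `x3–q`.  Offer `x'–q` and `x'–(m x3)`. -/
lemma stmt6_stepC {free client : Finset (Sym2 (Fin t ⊕ Fin t))} {x' q x3 : Fin t}
    {m : Fin t → Fin t}
    (hx3 : x3 ≠ x')
    (h5 : ∀ a, a ≠ x' → m a ≠ q)
    (h6 : ∀ a b, a ≠ x' → b ≠ x' → m a = m b → a = b)
    (h7 : ∀ a, a ≠ x' → stmt6_edg a (m a) ∈ client)
    (h3q : stmt6_edg x3 q ∈ client)
    (f1 : stmt6_edg x' q ∈ free) (f2 : stmt6_edg x' (m x3) ∈ free) :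
    WaiterForcesIn (stmt6_PMgoal t) 1 free client := by
  classical
  have hmq : m x3 ≠ q := h5 x3 hx3
  refine WaiterForcesIn.offer (stmt6_edg x' q) (stmt6_edg x' (m x3)) f1 f2
    (fun h => hmq ((edg_eq6.1 h).2.symm)) (.win ?_) (.win ?_)
  · -- client kept (x', q): matching is `update m x' q`
    refine stmt6_win_of (Function.update m x' q) ?_ ?_
    · intro a b hab
      by_cases ha : a = x' <;> by_cases hb : b = x'
      · rw [ha, hb]
      · rw [ha, Function.update_self, Function.update_of_ne hb] at hab
        exact absurd hab.symm (h5 b hb)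
      · rw [hb, Function.update_self, Function.update_of_ne ha] at hab
        exact absurd hab (h5 a ha)
      · rw [Function.update_of_ne ha, Function.update_of_ne hb] at hab
        exact h6 a b ha hb hab
    · intro a
      by_cases ha : a = x'
      · rw [ha, Function.update_self]; exact Finset.mem_insert_self _ _
      · rw [Function.update_of_ne ha]; exact Finset.mem_insert_of_mem (h7 a ha)
  · -- client kept (x', m x3): matching is `update (update m x3 q) x' (m x3)`
    refine stmt6_win_of (Function.update (Function.update m x3 q) x' (m x3)) ?_ ?_
    · have hval : ∀ a, a ≠ x' → a ≠ x3 →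
        Function.update (Function.update m x3 q) x' (m x3) a = m a := by
        intro a ha ha3
        rw [Function.update_of_ne ha, Function.update_of_ne ha3]
      have hval3 : Function.update (Function.update m x3 q) x' (m x3) x3 = q := by
        rw [Function.update_of_ne hx3, Function.update_self]
      have hval' : Function.update (Function.update m x3 q) x' (m x3) x' = m x3 :=
        Function.update_self _ _ _
      intro a b hab
      by_cases ha : a = x' <;> by_cases hb : b = x'
      · rw [ha, hb]
      · rw [ha, hval'] at hab
        by_cases hb3 : b = x3
        · rw [hb3, hval3] at hab; exact absurd hab hmq
        · rw [hval b hb hb3] at hab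
          exact absurd (h6 _ _ hx3 hb hab).symm hb3
      · rw [hb, hval'] at hab
        by_cases ha3 : a = x3
        · rw [ha3, hval3] at hab; exact absurd hab.symm hmq
        · rw [hval a ha ha3] at hab
          exact absurd (h6 _ _ hx3 ha hab.symm).symm ha3
      · by_cases ha3 : a = x3 <;> by_cases hb3 : b = x3
        · rw [ha3, hb3]
        · rw [ha3, hval3, hval b hb hb3] at hab; exact absurd hab.symm (h5 b hb)
        · rw [hb3, hval3, hval a ha ha3] at hab; exact absurd hab (h5 a ha)
        · rw [hval a ha ha3, hval b hb hb3] at hab; exact h6 a b ha hb hab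
    · intro a
      by_cases ha : a = x'
      · rw [ha, Function.update_self]; exact Finset.mem_insert_self _ _
      · by_cases ha3 : a = x3
        · rw [ha3, Function.update_of_ne hx3, Function.update_self]
          exact Finset.mem_insert_of_mem h3q
        · rw [Function.update_of_ne ha, Function.update_of_ne ha3]
          exact Finset.mem_insert_of_mem (h7 a ha)

lemma stmt6_notMem_pair {e f g : Sym2 (Fin t ⊕ Fin t)} (h1 : e ≠ f) (h2 : e ≠ g) :
    e ∉ ({f, g} : Finset (Sym2 (Fin t ⊕ Fin t))) := by
  simp [h1, h2]

/-- Rounds B,C of the endgame: unmatched left `x'`, unmatched right `q`,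
`x3,x4` matched lefts.  Offer `x3–q` and `x4–q`. -/
lemma stmt6_stepB {free client : Finset (Sym2 (Fin t ⊕ Fin t))} {x' q x3 x4 : Fin t}
    {m : Fin t → Fin t}
    (hx3 : x3 ≠ x') (hx4 : x4 ≠ x') (h34 : x3 ≠ x4)
    (h5 : ∀ a, a ≠ x' → m a ≠ q)
    (h6 : ∀ a b, a ≠ x' → b ≠ x' → m a = m b → a = b)
    (h7 : ∀ a, a ≠ x' → stmt6_edg a (m a) ∈ client)
    (f3 : stmt6_edg x3 q ∈ free) (f4 : stmt6_edg x4 q ∈ free)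
    (fq : stmt6_edg x' q ∈ free) (fm3 : stmt6_edg x' (m x3) ∈ free) (fm4 : stmt6_edg x' (m x4) ∈ free) :
    WaiterForcesIn (stmt6_PMgoal t) 2 free client := by
  classical
  refine WaiterForcesIn.offer (stmt6_edg x3 q) (stmt6_edg x4 q) f3 f4
    (fun h => h34 (edg_eq6.1 h).1) ?_ ?_
  · refine stmt6_stepC hx3 h5 h6 (fun a ha => Finset.mem_insert_of_mem (h7 a ha))
      (Finset.mem_insert_self _ _) ?_ ?_
    · exact Finset.mem_sdiff.2 ⟨fq, stmt6_notMem_pair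
        (fun h => hx3 (edg_eq6.1 h).1.symm) (fun h => hx4 (edg_eq6.1 h).1.symm)⟩
    · exact Finset.mem_sdiff.2 ⟨fm3, stmt6_notMem_pair
        (fun h => hx3 (edg_eq6.1 h).1.symm) (fun h => hx4 (edg_eq6.1 h).1.symm)⟩
  · refine stmt6_stepC hx4 h5 h6 (fun a ha => Finset.mem_insert_of_mem (h7 a ha))
      (Finset.mem_insert_self _ _) ?_ ?_
    · exact Finset.mem_sdiff.2 ⟨fq, stmt6_notMem_pair
        (fun h => hx3 (edg_eq6.1 h).1.symm) (fun h => hx4 (edg_eq6.1 h).1.symm)⟩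
    · exact Finset.mem_sdiff.2 ⟨fm4, stmt6_notMem_pair
        (fun h => hx3 (edg_eq6.1 h).1.symm) (fun h => hx4 (edg_eq6.1 h).1.symm)⟩

/-- After round A: client kept `xi–p`; the other unmatched left is `x'`. -/
lemma stmt6_baseStep {free client : Finset (Sym2 (Fin t ⊕ Fin t))}
    {xi x' p q x3 x4 : Fin t} {m : Fin t → Fin t}
    (hxx : xi ≠ x') (hpq : p ≠ q)
    (hx3i : x3 ≠ xi) (hx3' : x3 ≠ x') (hx4i : x4 ≠ xi) (hx4' : x4 ≠ x') (h34 : x3 ≠ x4)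
    (H5 : ∀ a, a ≠ xi → a ≠ x' → m a ≠ q ∧ m a ≠ p)
    (H6 : ∀ a b, a ≠ xi → a ≠ x' → b ≠ xi → b ≠ x' → m a = m b → a = b)
    (H7 : ∀ a, a ≠ xi → a ≠ x' → stmt6_edg a (m a) ∈ client)
    (f3 : stmt6_edg x3 q ∈ free) (f4 : stmt6_edg x4 q ∈ free) (fq : stmt6_edg x' q ∈ free)
    (fm3 : stmt6_edg x' (m x3) ∈ free) (fm4 : stmt6_edg x' (m x4) ∈ free) :
    WaiterForcesIn (stmt6_PMgoal t) 2 (free \ {stmt6_edg xi p, stmt6_edg x' p}) (insert (stmt6_edg xi p) client) := by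
  classical
  have hm3p : m x3 ≠ p := (H5 x3 hx3i hx3').2
  have hm4p : m x4 ≠ p := (H5 x4 hx4i hx4').2
  have e3 : Function.update m xi p x3 = m x3 := Function.update_of_ne hx3i _ _
  have e4 : Function.update m xi p x4 = m x4 := Function.update_of_ne hx4i _ _
  refine stmt6_stepB (q := q) (m := Function.update m xi p) hx3' hx4' h34 ?_ ?_ ?_
    ?_ ?_ ?_ ?_ ?_
  · intro a ha
    by_cases hai : a = xi
    · rw [hai, Function.update_self]; exact hpq
    · rw [Function.update_of_ne hai]; exact (H5 a hai ha).1
  · intro a b ha hb hab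
    by_cases hai : a = xi <;> by_cases hbi : b = xi
    · rw [hai, hbi]
    · rw [hai, Function.update_self, Function.update_of_ne hbi] at hab
      exact absurd hab.symm (H5 b hbi hb).2
    · rw [hbi, Function.update_self, Function.update_of_ne hai] at hab
      exact absurd hab (H5 a hai ha).2
    · rw [Function.update_of_ne hai, Function.update_of_ne hbi] at hab
      exact H6 a b hai ha hbi hb hab
  · intro a ha
    by_cases hai : a = xi
    · rw [hai, Function.update_self]; exact Finset.mem_insert_self _ _
    · rw [Function.update_of_ne hai]
      exact Finset.mem_insert_of_mem (H7 a hai ha)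
  · exact Finset.mem_sdiff.2 ⟨f3, stmt6_notMem_pair
      (fun h => hx3i (edg_eq6.1 h).1) (fun h => hx3' (edg_eq6.1 h).1)⟩
  · exact Finset.mem_sdiff.2 ⟨f4, stmt6_notMem_pair
      (fun h => hx4i (edg_eq6.1 h).1) (fun h => hx4' (edg_eq6.1 h).1)⟩
  · exact Finset.mem_sdiff.2 ⟨fq, stmt6_notMem_pair
      (fun h => hxx ((edg_eq6.1 h).1).symm) (fun h => hpq ((edg_eq6.1 h).2).symm)⟩
  · rw [e3]
    exact Finset.mem_sdiff.2 ⟨fm3, stmt6_notMem_pair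
      (fun h => hxx ((edg_eq6.1 h).1).symm) (fun h => hm3p (edg_eq6.1 h).2)⟩
  · rw [e4]
    exact Finset.mem_sdiff.2 ⟨fm4, stmt6_notMem_pair
      (fun h => hxx ((edg_eq6.1 h).1).symm) (fun h => hm4p (edg_eq6.1 h).2)⟩

lemma stmt6_main (ht : 4 ≤ t) (n : ℕ) :
    ∀ (free client : Finset (Sym2 (Fin t ⊕ Fin t))) (L L' : Finset (Fin t))
      (p q : Fin t) (m : Fin t → Fin t),
      L.card = n + 2 → L'.card = n + 1 → q ∈ L' → p ∉ L' →
      (∀ a, a ∉ L → m a ∉ L' ∧ m a ≠ p) →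
      (∀ a b, a ∉ L → b ∉ L → m a = m b → a = b) →
      (∀ a, a ∉ L → stmt6_edg a (m a) ∈ client) →
      (∀ a b, ((a ∈ L ∧ (b ∈ L' ∨ b = p ∨ ∃ c, c ∉ L ∧ m c = b)) ∨ (a ∉ L ∧ b = q)) →
        stmt6_edg a b ∈ free) →
      WaiterForcesIn (stmt6_PMgoal t) (n + 3) free client := by
  induction n with
  | zero =>
    intro free client L L' p q m hL hL' hq hp H5 H6 H7 H8
    have hpq : p ≠ q := fun h => hp (h ▸ hq)
    obtain ⟨x1, x2, hx12, rfl⟩ := Finset.card_eq_two.1 hL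
    have hx1L : x1 ∈ ({x1, x2} : Finset (Fin t)) := Finset.mem_insert_self _ _
    have hx2L : x2 ∈ ({x1, x2} : Finset (Fin t)) := by
      exact Finset.mem_insert_of_mem (Finset.mem_singleton_self _)
    have hcompl : 1 < (Finset.univ \ ({x1, x2} : Finset (Fin t))).card := by
      rw [Finset.card_sdiff_of_subset (Finset.subset_univ _), Finset.card_univ, Fintype.card_fin, hL]
      omega
    obtain ⟨x3, hx3mem, x4, hx4mem, h34⟩ := Finset.one_lt_card.1 hcompl
    have hx3L : x3 ∉ ({x1, x2} : Finset (Fin t)) := (Finset.mem_sdiff.1 hx3mem).2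
    have hx4L : x4 ∉ ({x1, x2} : Finset (Fin t)) := (Finset.mem_sdiff.1 hx4mem).2
    have hx31 : x3 ≠ x1 := by intro h; exact hx3L (by rw [h]; exact hx1L)
    have hx32 : x3 ≠ x2 := by intro h; exact hx3L (by rw [h]; exact hx2L)
    have hx41 : x4 ≠ x1 := by intro h; exact hx4L (by rw [h]; exact hx1L)
    have hx42 : x4 ≠ x2 := by intro h; exact hx4L (by rw [h]; exact hx2L)
    have notL : ∀ a : Fin t, a ≠ x1 → a ≠ x2 → a ∉ ({x1, x2} : Finset (Fin t)) := by
      intro a h1 h2; simp [h1, h2]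
    refine WaiterForcesIn.offer (stmt6_edg x1 p) (stmt6_edg x2 p)
      (H8 _ _ (Or.inl ⟨hx1L, Or.inr (Or.inl rfl)⟩))
      (H8 _ _ (Or.inl ⟨hx2L, Or.inr (Or.inl rfl)⟩))
      (fun h => hx12 (edg_eq6.1 h).1) ?_ ?_
    · exact stmt6_baseStep hx12 hpq hx31 hx32 hx41 hx42 h34
        (fun a h1 h2 => ⟨fun h => (H5 a (notL a h1 h2)).1 (by rw [h]; exact hq), (H5 a (notL a h1 h2)).2⟩)
        (fun a b ha1 ha2 hb1 hb2 => H6 a b (notL a ha1 ha2) (notL b hb1 hb2))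
        (fun a h1 h2 => H7 a (notL a h1 h2))
        (H8 _ _ (Or.inr ⟨hx3L, rfl⟩)) (H8 _ _ (Or.inr ⟨hx4L, rfl⟩))
        (H8 _ _ (Or.inl ⟨hx2L, Or.inl hq⟩))
        (H8 _ _ (Or.inl ⟨hx2L, Or.inr (Or.inr ⟨x3, hx3L, rfl⟩)⟩))
        (H8 _ _ (Or.inl ⟨hx2L, Or.inr (Or.inr ⟨x4, hx4L, rfl⟩)⟩))
    · rw [Finset.pair_comm (stmt6_edg x1 p) (stmt6_edg x2 p)]
      exact stmt6_baseStep hx12.symm hpq hx32 hx31 hx42 hx41 h34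
        (fun a h2 h1 => ⟨fun h => (H5 a (notL a h1 h2)).1 (by rw [h]; exact hq), (H5 a (notL a h1 h2)).2⟩)
        (fun a b ha2 ha1 hb2 hb1 => H6 a b (notL a ha1 ha2) (notL b hb1 hb2))
        (fun a h2 h1 => H7 a (notL a h1 h2))
        (H8 _ _ (Or.inr ⟨hx3L, rfl⟩)) (H8 _ _ (Or.inr ⟨hx4L, rfl⟩))
        (H8 _ _ (Or.inl ⟨hx1L, Or.inl hq⟩))
        (H8 _ _ (Or.inl ⟨hx1L, Or.inr (Or.inr ⟨x3, hx3L, rfl⟩)⟩))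
        (H8 _ _ (Or.inl ⟨hx1L, Or.inr (Or.inr ⟨x4, hx4L, rfl⟩)⟩))
  | succ k ih =>
    intro free client L L' p q m hL hL' hq hp H5 H6 H7 H8
    have hpq : p ≠ q := fun h => hp (h ▸ hq)
    obtain ⟨x, hx⟩ := Finset.card_pos.1 (show 0 < L.card by rw [hL]; omega)
    obtain ⟨w, hw⟩ : (L'.erase q).Nonempty := Finset.card_pos.1
      (by rw [Finset.card_erase_of_mem hq, hL']; omega)
    have hwq : w ≠ q := (Finset.mem_erase.1 hw).1
    have hwL' : w ∈ L' := (Finset.mem_erase.1 hw).2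
    have hpw : p ≠ w := fun h => hp (h ▸ hwL')
    have notL : ∀ a : Fin t, a ∉ L.erase x → a ≠ x → a ∉ L :=
      fun a ha hax h => ha (Finset.mem_erase.2 ⟨hax, h⟩)
    have hnotpair : ∀ a b : Fin t, a ≠ x ∨ (b ≠ p ∧ b ≠ w) →
        stmt6_edg a b ∉ ({stmt6_edg x p, stmt6_edg x w} : Finset (Sym2 (Fin t ⊕ Fin t))) := by
      rintro a b (h | ⟨h1, h2⟩)
      · exact stmt6_notMem_pair (fun hh => h (edg_eq6.1 hh).1) (fun hh => h (edg_eq6.1 hh).1)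
      · exact stmt6_notMem_pair (fun hh => h1 (edg_eq6.1 hh).2) (fun hh => h2 (edg_eq6.1 hh).2)
    refine WaiterForcesIn.offer (stmt6_edg x p) (stmt6_edg x w)
      (H8 _ _ (Or.inl ⟨hx, Or.inr (Or.inl rfl)⟩))
      (H8 _ _ (Or.inl ⟨hx, Or.inl hwL'⟩))
      (fun h => hpw (edg_eq6.1 h).2) ?_ ?_
    · -- client kept (x, p); new pivot is w
      refine ih _ _ (L.erase x) (L'.erase w) w q (Function.update m x p)
        (by rw [Finset.card_erase_of_mem hx, hL]; omega)
        (by rw [Finset.card_erase_of_mem hwL', hL']; omega)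
        (Finset.mem_erase.2 ⟨fun h => hwq h.symm, hq⟩)
        (Finset.notMem_erase _ _) ?_ ?_ ?_ ?_
      · intro a ha
        by_cases hax : a = x
        · rw [hax, Function.update_self]
          exact ⟨fun h => hp (Finset.mem_of_mem_erase h), hpw⟩
        · have haL : a ∉ L := notL a ha hax
          rw [Function.update_of_ne hax]
          exact ⟨fun h => (H5 a haL).1 (Finset.mem_of_mem_erase h),
            fun h => (H5 a haL).1 (h ▸ hwL')⟩
      · intro a b ha hb hab
        by_cases hax : a = x <;> by_cases hbx : b = x
        · rw [hax, hbx]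
        · rw [hax, Function.update_self, Function.update_of_ne hbx] at hab
          exact absurd hab.symm (H5 b (notL b hb hbx)).2
        · rw [hbx, Function.update_self, Function.update_of_ne hax] at hab
          exact absurd hab (H5 a (notL a ha hax)).2
        · rw [Function.update_of_ne hax, Function.update_of_ne hbx] at hab
          exact H6 a b (notL a ha hax) (notL b hb hbx) hab
      · intro a ha
        by_cases hax : a = x
        · rw [hax, Function.update_self]; exact Finset.mem_insert_self _ _
        · rw [Function.update_of_ne hax]
          exact Finset.mem_insert_of_mem (H7 a (notL a ha hax))
      · rintro a b (⟨haL, hb⟩ | ⟨haL, hbq⟩)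
        · have hax : a ≠ x := (Finset.mem_erase.1 haL).1
          have haL2 : a ∈ L := Finset.mem_of_mem_erase haL
          refine Finset.mem_sdiff.2 ⟨?_, hnotpair a b (Or.inl hax)⟩
          rcases hb with hbL' | rfl | ⟨c, hc, rfl⟩
          · exact H8 _ _ (Or.inl ⟨haL2, Or.inl (Finset.mem_of_mem_erase hbL')⟩)
          · exact H8 _ _ (Or.inl ⟨haL2, Or.inl hwL'⟩)
          · by_cases hcx : c = x
            · rw [hcx, Function.update_self]
              exact H8 _ _ (Or.inl ⟨haL2, Or.inr (Or.inl rfl)⟩)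
            · rw [Function.update_of_ne hcx]
              exact H8 _ _ (Or.inl ⟨haL2, Or.inr (Or.inr ⟨c, notL c hc hcx, rfl⟩)⟩)
        · rw [hbq]
          refine Finset.mem_sdiff.2 ⟨?_, hnotpair a q (Or.inr ⟨fun h => hpq h.symm, fun h => hwq h.symm⟩)⟩
          by_cases hax : a = x
          · rw [hax]; exact H8 _ _ (Or.inl ⟨hx, Or.inl hq⟩)
          · exact H8 _ _ (Or.inr ⟨notL a haL hax, rfl⟩)
    · -- client kept (x, w); pivot stays p
      refine ih _ _ (L.erase x) (L'.erase w) p q (Function.update m x w)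
        (by rw [Finset.card_erase_of_mem hx, hL]; omega)
        (by rw [Finset.card_erase_of_mem hwL', hL']; omega)
        (Finset.mem_erase.2 ⟨fun h => hwq h.symm, hq⟩)
        (fun h => hp (Finset.mem_of_mem_erase h)) ?_ ?_ ?_ ?_
      · intro a ha
        by_cases hax : a = x
        · rw [hax, Function.update_self]
          exact ⟨Finset.notMem_erase _ _, fun h => hpw h.symm⟩
        · have haL : a ∉ L := notL a ha hax
          rw [Function.update_of_ne hax]
          exact ⟨fun h => (H5 a haL).1 (Finset.mem_of_mem_erase h), (H5 a haL).2⟩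
      · intro a b ha hb hab
        by_cases hax : a = x <;> by_cases hbx : b = x
        · rw [hax, hbx]
        · rw [hax, Function.update_self, Function.update_of_ne hbx] at hab
          exact absurd (hab ▸ hwL') (H5 b (notL b hb hbx)).1
        · rw [hbx, Function.update_self, Function.update_of_ne hax] at hab
          exact absurd (hab ▸ hwL') (H5 a (notL a ha hax)).1
        · rw [Function.update_of_ne hax, Function.update_of_ne hbx] at hab
          exact H6 a b (notL a ha hax) (notL b hb hbx) hab
      · intro a ha
        by_cases hax : a = x
        · rw [hax, Function.update_self]; exact Finset.mem_insert_self _ _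
        · rw [Function.update_of_ne hax]
          exact Finset.mem_insert_of_mem (H7 a (notL a ha hax))
      · rintro a b (⟨haL, hb⟩ | ⟨haL, hbq⟩)
        · have hax : a ≠ x := (Finset.mem_erase.1 haL).1
          have haL2 : a ∈ L := Finset.mem_of_mem_erase haL
          refine Finset.mem_sdiff.2 ⟨?_, hnotpair a b (Or.inl hax)⟩
          rcases hb with hbL' | rfl | ⟨c, hc, rfl⟩
          · exact H8 _ _ (Or.inl ⟨haL2, Or.inl (Finset.mem_of_mem_erase hbL')⟩)
          · exact H8 _ _ (Or.inl ⟨haL2, Or.inr (Or.inl rfl)⟩)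
          · by_cases hcx : c = x
            · rw [hcx, Function.update_self]
              exact H8 _ _ (Or.inl ⟨haL2, Or.inl hwL'⟩)
            · rw [Function.update_of_ne hcx]
              exact H8 _ _ (Or.inl ⟨haL2, Or.inr (Or.inr ⟨c, notL c hc hcx, rfl⟩)⟩)
        · rw [hbq]
          refine Finset.mem_sdiff.2 ⟨?_, hnotpair a q (Or.inr ⟨fun h => hpq h.symm, fun h => hwq h.symm⟩)⟩
          by_cases hax : a = x
          · rw [hax]; exact H8 _ _ (Or.inl ⟨hx, Or.inl hq⟩)
          · exact H8 _ _ (Or.inr ⟨notL a haL hax, rfl⟩)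

lemma stmt6_afterFirst (ht : 4 ≤ t) (i₀ j₀ c d : Fin t) (hcd : c ≠ d) (hcj : c ≠ j₀)
    (hdj : d ≠ j₀) :
    WaiterForcesIn (stmt6_PMgoal t) t
      (((((Finset.univ ×ˢ Finset.univ : Finset (Fin t × Fin t)).image
          (fun p => s(Sum.inl p.1, Sum.inr p.2))) \ {s(Sum.inl i₀, Sum.inr j₀)}) \
        {stmt6_edg i₀ c, stmt6_edg i₀ d}))
      (insert (stmt6_edg i₀ c) ∅) := by
  classical
  have hall : ∀ a b : Fin t, stmt6_edg a b ∈ (Finset.univ ×ˢ Finset.univ :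
      Finset (Fin t × Fin t)).image (fun p => s(Sum.inl p.1, Sum.inr p.2)) :=
    fun a b => Finset.mem_image.2 ⟨(a, b),
      Finset.mem_product.2 ⟨Finset.mem_univ _, Finset.mem_univ _⟩, rfl⟩
  obtain ⟨q, hqmem⟩ : ((Finset.univ \ {c, d} : Finset (Fin t)).erase j₀).Nonempty := by
    apply Finset.card_pos.1
    rw [Finset.card_erase_of_mem]
    · rw [Finset.card_sdiff_of_subset (Finset.subset_univ _), Finset.card_univ, Fintype.card_fin,
        Finset.card_pair hcd]
      omega
    · exact Finset.mem_sdiff.2 ⟨Finset.mem_univ _, by simp [Ne.symm hcj, Ne.symm hdj]⟩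
  have hqj : q ≠ j₀ := (Finset.mem_erase.1 hqmem).1
  have hqL' : q ∈ (Finset.univ \ {c, d} : Finset (Fin t)) := Finset.mem_of_mem_erase hqmem
  have hqc : q ≠ c := by
    have := (Finset.mem_sdiff.1 hqL').2; simp at this; exact this.1
  have hqd : q ≠ d := by
    have := (Finset.mem_sdiff.1 hqL').2; simp at this; exact this.2
  have hnotL : ∀ a : Fin t, a ∉ Finset.univ.erase i₀ → a = i₀ := by
    intro a ha
    by_contra h
    exact ha (Finset.mem_erase.2 ⟨h, Finset.mem_univ a⟩)
  have h3 : t - 3 + 3 = t := by omega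
  have H := stmt6_main ht (t - 3)
    (((((Finset.univ ×ˢ Finset.univ : Finset (Fin t × Fin t)).image
        (fun p => s(Sum.inl p.1, Sum.inr p.2))) \ {s(Sum.inl i₀, Sum.inr j₀)}) \
      {stmt6_edg i₀ c, stmt6_edg i₀ d}))
    (insert (stmt6_edg i₀ c) ∅)
    (Finset.univ.erase i₀) (Finset.univ \ {c, d}) d q (fun _ => c)
    (by rw [Finset.card_erase_of_mem (Finset.mem_univ _), Finset.card_univ,
          Fintype.card_fin]; omega)
    (by rw [Finset.card_sdiff_of_subset (Finset.subset_univ _), Finset.card_univ, Fintype.card_fin,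
          Finset.card_pair hcd]; omega)
    hqL' (by simp)
    (fun a _ => ⟨by simp, hcd⟩)
    (fun a b ha hb _ => by rw [hnotL a ha, hnotL b hb])
    (fun a ha => by rw [hnotL a ha]; exact Finset.mem_insert_self _ _)
    ?_
  · rw [h3] at H
    exact H
  · rintro a b (⟨haL, _⟩ | ⟨_, hbq⟩)
    · have hai : a ≠ i₀ := (Finset.mem_erase.1 haL).1
      refine Finset.mem_sdiff.2 ⟨Finset.mem_sdiff.2 ⟨hall a b, ?_⟩, ?_⟩
      · exact Finset.notMem_singleton.2 (fun h => hai (edg_eq6.1 h).1)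
      · exact stmt6_notMem_pair (fun h => hai (edg_eq6.1 h).1) (fun h => hai (edg_eq6.1 h).1)
    · rw [hbq]
      refine Finset.mem_sdiff.2 ⟨Finset.mem_sdiff.2 ⟨hall a q, ?_⟩, ?_⟩
      · exact Finset.notMem_singleton.2 (fun h => hqj (edg_eq6.1 h).2)
      · exact stmt6_notMem_pair (fun h => hqc (edg_eq6.1 h).2) (fun h => hqd (edg_eq6.1 h).2)


/-- let `t ≥ 4` and let `K_{t,t}⁻` be `K_{t,t}` minus one edge.
Offering only edges of `K_{t,t}⁻`, Waiter can force Client's graph to contain a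
perfect matching of `K_{t,t}` within `t+1` rounds.  The vertex classes are the
two copies of `Fin t`, and the removed edge joins `i₀` to `j₀`. -/
theorem stmt_6 (t : ℕ) (ht : 4 ≤ t) (i₀ j₀ : Fin t) :
    WaiterForcesIn
      (fun client _free =>
        ∃ M : Finset (Sym2 (Fin t ⊕ Fin t)), M ⊆ client ∧
          ∀ v : Fin t ⊕ Fin t, (M.filter (fun e => v ∈ e)).card = 1)
      (t + 1)
      (((Finset.univ ×ˢ Finset.univ : Finset (Fin t × Fin t)).image
          (fun p => s(Sum.inl p.1, Sum.inr p.2))) \ {s(Sum.inl i₀, Sum.inr j₀)})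
      ∅ := by
  classical
  have hall : ∀ a b : Fin t, stmt6_edg a b ∈ (Finset.univ ×ˢ Finset.univ :
      Finset (Fin t × Fin t)).image (fun p => s(Sum.inl p.1, Sum.inr p.2)) :=
    fun a b => Finset.mem_image.2 ⟨(a, b),
      Finset.mem_product.2 ⟨Finset.mem_univ _, Finset.mem_univ _⟩, rfl⟩
  have h2 : 1 < (Finset.univ.erase j₀).card := by
    rw [Finset.card_erase_of_mem (Finset.mem_univ _), Finset.card_univ, Fintype.card_fin]
    omega
  obtain ⟨a, hamem, b, hbmem, hab⟩ := Finset.one_lt_card.1 h2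
  have haj : a ≠ j₀ := (Finset.mem_erase.1 hamem).1
  have hbj : b ≠ j₀ := (Finset.mem_erase.1 hbmem).1
  show WaiterForcesIn (stmt6_PMgoal t) (t + 1) _ _
  refine WaiterForcesIn.offer (stmt6_edg i₀ a) (stmt6_edg i₀ b)
    (Finset.mem_sdiff.2 ⟨hall i₀ a, Finset.notMem_singleton.2
      (fun h => haj (edg_eq6.1 h).2)⟩)
    (Finset.mem_sdiff.2 ⟨hall i₀ b, Finset.notMem_singleton.2
      (fun h => hbj (edg_eq6.1 h).2)⟩)
    (fun h => hab (edg_eq6.1 h).2) ?_ ?_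
  · exact stmt6_afterFirst ht i₀ j₀ a b hab haj hbj
  · rw [Finset.pair_comm (stmt6_edg i₀ a) (stmt6_edg i₀ b)]
    exact stmt6_afterFirst ht i₀ j₀ b a hab.symm hbj haj
end

section
/- Let F be a rooted forest with e(F) edges, and let B be a complete graph on at least v(F) + e(F) vertices, with distinct target vertices fixed for the roots of F. Then in the unbiased Waiter-Client game on B, Waiter can force, within at most e(F) rounds, a red copy of F in which every root is mapped to its fixed target vertex, every colored edge has an endpoint at a non-leaf of the red copy, and the blue edges between the copy and the remaining vertices form a star forest in which each star is centered at a vertex u of the copy and has at most deg(u) edges. -/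
open SimpleGraph

open scoped Classical

section TreeAux
variable {V : Type*} {F : SimpleGraph V}

lemma shortest_support_dist {u r x : V} (p : F.Walk u r) (hlen : p.length = F.dist u r)
    (hx : x ∈ p.support) (hne : x ≠ u) : F.dist x r + 1 ≤ F.dist u r := by
  have hsplit := congrArg SimpleGraph.Walk.length (p.take_spec hx)
  rw [SimpleGraph.Walk.length_append] at hsplit
  have h1 : F.dist x r ≤ (p.dropUntil x hx).length := SimpleGraph.dist_le _
  have h2 : (p.takeUntil x hx).length ≠ 0 := fun h0 =>
    hne (SimpleGraph.Walk.eq_of_length_eq_zero h0).symm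
  omega

lemma adj_dist_cases (hforest : F.IsAcyclic) {a b r : V} (hab : F.Adj a b)
    (ha : F.Reachable a r) (hb : F.Reachable b r) :
    F.dist a r + 1 = F.dist b r ∨ F.dist b r + 1 = F.dist a r := by
  obtain ⟨p, hp, hpl⟩ := ha.exists_path_of_dist
  obtain ⟨q, hq, hql⟩ := hb.exists_path_of_dist
  have t1 : F.dist b r ≤ F.dist a r + 1 := by
    have := SimpleGraph.dist_le (SimpleGraph.Walk.cons hab.symm p)
    rwa [SimpleGraph.Walk.length_cons, hpl] at this
  have t2 : F.dist a r ≤ F.dist b r + 1 := by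
    have := SimpleGraph.dist_le (SimpleGraph.Walk.cons hab q)
    rwa [SimpleGraph.Walk.length_cons, hql] at this
  have hne : F.dist a r ≠ F.dist b r := by
    intro heq
    have hbs : b ∉ p.support := fun hmem => by
      have := shortest_support_dist p hpl hmem hab.ne'
      omega
    have hpath : (SimpleGraph.Walk.cons hab.symm p).IsPath := by
      rw [SimpleGraph.Walk.cons_isPath_iff]; exact ⟨hp, hbs⟩
    have huniq := hforest.path_unique ⟨_, hpath⟩ ⟨q, hq⟩
    have hl := congrArg (fun (P : F.Path b r) => P.1.length) huniq
    simp only [SimpleGraph.Walk.length_cons] at hl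
    rw [hpl, hql] at hl
    omega
  omega

lemma parent_unique (hforest : F.IsAcyclic) {v r a a' : V}
    (hva : F.Adj a v) (hva' : F.Adj a' v) (hra : F.Reachable a r) (hra' : F.Reachable a' r)
    (hda : F.dist a r + 1 = F.dist v r) (hda' : F.dist a' r + 1 = F.dist v r) : a = a' := by
  obtain ⟨p, hp, hpl⟩ := hra.exists_path_of_dist
  obtain ⟨p', hp', hpl'⟩ := hra'.exists_path_of_dist
  have hvs : v ∉ p.support := fun hmem => by
    have := shortest_support_dist p hpl hmem hva.ne'
    omega
  have hvs' : v ∉ p'.support := fun hmem => by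
    have := shortest_support_dist p' hpl' hmem hva'.ne'
    omega
  have hpath : (SimpleGraph.Walk.cons hva.symm p).IsPath := by
    rw [SimpleGraph.Walk.cons_isPath_iff]; exact ⟨hp, hvs⟩
  have hpath' : (SimpleGraph.Walk.cons hva'.symm p').IsPath := by
    rw [SimpleGraph.Walk.cons_isPath_iff]; exact ⟨hp', hvs'⟩
  have huniq := hforest.path_unique ⟨_, hpath⟩ ⟨_, hpath'⟩
  have hs := congrArg (fun (P : F.Path v r) => P.1.support) huniq
  simp only [SimpleGraph.Walk.support_cons] at hs
  have : p.support = p'.support := by simpa using hs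
  have h1 := p.support_eq_cons
  have h2 := p'.support_eq_cons
  rw [h1, h2] at this
  exact (List.cons.injEq _ _ _ _ ▸ this).1

end TreeAux

def stmtGoal {V β : Type*} [Fintype V] [Fintype β] [DecidableEq β]
    (F : SimpleGraph V) (R : Finset V) (g : V → β) :
    Finset (Sym2 β) → Finset (Sym2 β) → Prop := fun client free =>
  ∃ f : V ↪ β,
    (∀ u v : V, F.Adj u v → s(f u, f v) ∈ client) ∧
    (∀ r ∈ R, f r = g r) ∧
    (∀ e ∈ (⊤ : SimpleGraph β).edgeFinset \ free,
      ∃ u : V, f u ∈ e ∧ ¬(F.degree u = 1 ∧ u ∉ R)) ∧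
    (∀ w : β, w ∉ Set.range f →
      (((((⊤ : SimpleGraph β).edgeFinset \ free) \ client).filter
          (fun e => w ∈ e ∧ ∃ u : V, f u ∈ e)).card ≤ 1)) ∧
    (∀ u : V,
      (((((⊤ : SimpleGraph β).edgeFinset \ free) \ client).filter
          (fun e => f u ∈ e ∧ ∃ w : β, w ∈ e ∧ w ∉ Set.range f)).card
        ≤ F.degree u))


lemma mainGame {V β : Type*} [Fintype V] [Fintype β] [DecidableEq β]
    (F : SimpleGraph V) (R : Finset V) (g : V → β)
    (par : V → V) (d : V → ℕ)
    (hd0 : ∀ v, d v = 0 ↔ v ∈ R)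
    (hparAdj : ∀ v ∉ R, F.Adj (par v) v)
    (hparD : ∀ v ∉ R, d (par v) + 1 = d v)
    (hparUniq : ∀ v ∉ R, ∀ a, F.Adj a v → d a + 1 = d v → a = par v)
    (hdir : ∀ a b, F.Adj a b → d a + 1 = d b ∨ d b + 1 = d a)
    (hβ : Fintype.card V + (Finset.univ \ R).card ≤ Fintype.card β) :
    ∀ (n : ℕ) (S : Finset V) (f : V → β) (W : Finset β) (free client : Finset (Sym2 β)),
      R ⊆ S →
      (∀ v ∈ S, v ∉ R → par v ∈ S) →
      Set.InjOn f (S : Set V) →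
      (∀ r ∈ R, f r = g r) →
      W.card + R.card ≤ S.card →
      (∀ w ∈ W, w ∉ S.image f) →
      free ⊆ (⊤ : SimpleGraph β).edgeFinset →
      (∀ e ∈ (⊤ : SimpleGraph β).edgeFinset \ free, ∀ x ∈ e, x ∈ S.image f ∪ W) →
      client ⊆ (⊤ : SimpleGraph β).edgeFinset \ free →
      (∀ v ∈ S, v ∉ R → s(f (par v), f v) ∈ client) →
      (∀ e ∈ (⊤ : SimpleGraph β).edgeFinset \ free,
        ∃ u ∈ S, f u ∈ e ∧ ¬(F.degree u = 1 ∧ u ∉ R)) →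
      (∀ w : β, w ∉ S.image f →
        ((((⊤ : SimpleGraph β).edgeFinset \ free) \ client).filter
          (fun e => w ∈ e)).card ≤ 1) →
      (∀ u ∈ S,
        ((((⊤ : SimpleGraph β).edgeFinset \ free) \ client).filter
          (fun e => f u ∈ e)).card
          + (Finset.univ.filter (fun x => x ∉ S ∧ x ∉ R ∧ par x = u)).card ≤ F.degree u) →
      (Finset.univ \ S).card = n →
      WaiterForcesIn (stmtGoal F R g) n free client := by
  intro n
  induction n with
  | zero =>
    intro S f W free client hRS hcl h3 h4 h5 h6 h7 h8 h9 h10 h11 h12 h13 hn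
    refine WaiterForcesIn.win ?_
    unfold stmtGoal
    have hSuniv : S = Finset.univ := by
      have h := Finset.card_eq_zero.mp hn
      have h2 : (Finset.univ : Finset V) ⊆ S := by
        intro x hx
        by_contra hxS
        have hmm : x ∈ Finset.univ \ S := Finset.mem_sdiff.mpr ⟨hx, hxS⟩
        rw [h] at hmm
        exact absurd hmm (Finset.notMem_empty x)
      exact Finset.eq_univ_iff_forall.mpr fun x => h2 (Finset.mem_univ x)
    subst hSuniv
    have hinj : Function.Injective f := fun a b hab => h3 (by simp) (by simp) hab
    refine ⟨⟨f, hinj⟩, ?_, ?_, ?_, ?_, ?_⟩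
    · intro a b hab
      rcases hdir a b hab with hc | hc
      · have hbR : b ∉ R := by
          intro hb
          have := (hd0 b).mpr hb
          omega
        have hpb := hparUniq b hbR a hab hc
        have h := h10 b (Finset.mem_univ b) hbR
        rw [← hpb] at h
        exact h
      · have haR : a ∉ R := by
          intro ha
          have := (hd0 a).mpr ha
          omega
        have hpa := hparUniq a haR b hab.symm hc
        have h := h10 a (Finset.mem_univ a) haR
        rw [← hpa] at h
        rw [Sym2.eq_swap]
        exact h
    · exact h4
    · intro e he
      obtain ⟨u, _, hm, hl⟩ := h11 e he
      exact ⟨u, hm, hl⟩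
    · intro w hw
      have hw' : w ∉ Finset.univ.image f := by
        simp only [Finset.mem_image]
        rintro ⟨a, -, rfl⟩
        exact hw ⟨a, rfl⟩
      refine le_trans (Finset.card_le_card ?_) (h12 w hw')
      intro e he
      rw [Finset.mem_filter] at he ⊢
      exact ⟨he.1, he.2.1⟩
    · intro u
      have hc := h13 u (Finset.mem_univ u)
      refine le_trans (Finset.card_le_card ?_) (le_trans (Nat.le_add_right _ _) hc)
      intro e he
      rw [Finset.mem_filter] at he ⊢
      exact ⟨he.1, he.2.1⟩

  | succ n ih =>
    intro S f W free client hRS hcl h3 h4 h5 h6 h7 h8 h9 h10 h11 h12 h13 hn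
    have hne : (Finset.univ \ S).Nonempty := by
      rw [← Finset.card_pos, hn]; omega
    obtain ⟨v, hv, hvmin⟩ := Finset.exists_min_image (Finset.univ \ S) d hne
    have hvS : v ∉ S := (Finset.mem_sdiff.mp hv).2
    have hvR : v ∉ R := fun h => hvS (hRS h)
    have huv : F.Adj (par v) v := hparAdj v hvR
    have hud : d (par v) + 1 = d v := hparD v hvR
    have huS : par v ∈ S := by
      by_contra h
      have hmem : par v ∈ Finset.univ \ S := Finset.mem_sdiff.mpr ⟨Finset.mem_univ _, h⟩
      have := hvmin (par v) hmem
      omega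
    -- counting: at least two untouched vertices
    have hRuniv : (Finset.univ \ R).card + R.card = Fintype.card V :=
      Finset.card_sdiff_add_card_eq_card (Finset.subset_univ R)
    have hS1 : S.card + 1 ≤ Fintype.card V := by
      have h1 : (insert v S).card ≤ Fintype.card V := Finset.card_le_univ _
      rwa [Finset.card_insert_of_notMem hvS] at h1
    have htc : (S.image f ∪ W).card + 2 ≤ Fintype.card β := by
      have h1 : (S.image f ∪ W).card ≤ (S.image f).card + W.card := Finset.card_union_le _ _
      have h2 : (S.image f).card ≤ S.card := Finset.card_image_le
      omega
    have huntouched : 1 < (Finset.univ \ (S.image f ∪ W)).card := by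
      have hh := Finset.card_sdiff_add_card_eq_card (Finset.subset_univ (S.image f ∪ W))
      have hcb : (Finset.univ : Finset β).card = Fintype.card β := rfl
      omega
    obtain ⟨w1, hw1, w2, hw2, hw12⟩ := Finset.one_lt_card.mp huntouched
    rw [Finset.mem_sdiff] at hw1 hw2
    have hw1t : w1 ∉ S.image f ∪ W := hw1.2
    have hw2t : w2 ∉ S.image f ∪ W := hw2.2
    have hfu : f (par v) ∈ S.image f := Finset.mem_image_of_mem f huS
    have hefree : ∀ w : β, w ∉ S.image f ∪ W → s(f (par v), w) ∈ free := by
      intro w hw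
      have hne' : f (par v) ≠ w := fun h => hw (Finset.mem_union_left _ (h ▸ hfu))
      have heT : s(f (par v), w) ∈ (⊤ : SimpleGraph β).edgeFinset := by
        rw [SimpleGraph.mem_edgeFinset, SimpleGraph.mem_edgeSet, SimpleGraph.top_adj]
        exact hne'
      by_contra h
      have hcol : s(f (par v), w) ∈ (⊤ : SimpleGraph β).edgeFinset \ free :=
        Finset.mem_sdiff.mpr ⟨heT, h⟩
      exact hw (h8 _ hcol w (by simp))
    have hdist : ∀ w w' : β, w ≠ w' → s(f (par v), w) ≠ s(f (par v), w') :=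
      fun w w' hne' h => hne' (Sym2.congr_right.mp h)
    have key : ∀ wk wo : β, wk ∉ S.image f ∪ W → wo ∉ S.image f ∪ W → wk ≠ wo →
        WaiterForcesIn (stmtGoal F R g) n (free \ {s(f (par v), wk), s(f (par v), wo)})
          (insert s(f (par v), wk) client) := by
      intro wk wo hwk hwo hkwo
      have hfuk : f (par v) ≠ wk := fun h => hwk (Finset.mem_union_left _ (h ▸ hfu))
      have hfuo : f (par v) ≠ wo := fun h => hwo (Finset.mem_union_left _ (h ▸ hfu))
      have hwkW : wk ∉ W := fun h => hwk (Finset.mem_union_right _ h)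
      have hwkI : wk ∉ S.image f := fun h => hwk (Finset.mem_union_left _ h)
      have hwoW : wo ∉ W := fun h => hwo (Finset.mem_union_right _ h)
      have hwoI : wo ∉ S.image f := fun h => hwo (Finset.mem_union_left _ h)
      have hekT : s(f (par v), wk) ∈ (⊤ : SimpleGraph β).edgeFinset := by
        rw [SimpleGraph.mem_edgeFinset, SimpleGraph.mem_edgeSet, SimpleGraph.top_adj]
        exact hfuk
      have heoT : s(f (par v), wo) ∈ (⊤ : SimpleGraph β).edgeFinset := by
        rw [SimpleGraph.mem_edgeFinset, SimpleGraph.mem_edgeSet, SimpleGraph.top_adj]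
        exact hfuo
      have hekfree : s(f (par v), wk) ∈ free := hefree wk hwk
      have heofree : s(f (par v), wo) ∈ free := hefree wo hwo
      have hekeo : s(f (par v), wk) ≠ s(f (par v), wo) := hdist _ _ hkwo
      have hekcol : s(f (par v), wk) ∉ (⊤ : SimpleGraph β).edgeFinset \ free :=
        fun h => (Finset.mem_sdiff.mp h).2 hekfree
      have heocol : s(f (par v), wo) ∉ (⊤ : SimpleGraph β).edgeFinset \ free :=
        fun h => (Finset.mem_sdiff.mp h).2 heofree
      have hclfree : ∀ e ∈ client, e ∉ free := fun e he h => (Finset.mem_sdiff.mp (h9 he)).2 h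
      have hcol' : (⊤ : SimpleGraph β).edgeFinset \ (free \ {s(f (par v), wk), s(f (par v), wo)})
          = insert s(f (par v), wk) (insert s(f (par v), wo)
              ((⊤ : SimpleGraph β).edgeFinset \ free)) := by
        ext e
        constructor
        · intro he
          rw [Finset.mem_sdiff] at he
          obtain ⟨hT, hnf⟩ := he
          by_cases hf : e ∈ free
          · have hmem : e ∈ ({s(f (par v), wk), s(f (par v), wo)} : Finset (Sym2 β)) := by
              by_contra hcon
              exact hnf (Finset.mem_sdiff.mpr ⟨hf, hcon⟩)
            rw [Finset.mem_insert, Finset.mem_singleton] at hmem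
            rcases hmem with h | h
            · exact Finset.mem_insert.mpr (Or.inl h)
            · exact Finset.mem_insert.mpr (Or.inr (Finset.mem_insert.mpr (Or.inl h)))
          · exact Finset.mem_insert.mpr (Or.inr (Finset.mem_insert.mpr
              (Or.inr (Finset.mem_sdiff.mpr ⟨hT, hf⟩))))
        · intro he
          rw [Finset.mem_insert, Finset.mem_insert] at he
          rcases he with rfl | rfl | he
          · exact Finset.mem_sdiff.mpr ⟨hekT, fun h => (Finset.mem_sdiff.mp h).2 (by simp)⟩
          · exact Finset.mem_sdiff.mpr ⟨heoT, fun h => (Finset.mem_sdiff.mp h).2 (by simp)⟩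
          · rw [Finset.mem_sdiff] at he
            exact Finset.mem_sdiff.mpr ⟨he.1, fun h => he.2 ((Finset.mem_sdiff.mp h).1)⟩
      have hblue' : (insert s(f (par v), wk) (insert s(f (par v), wo)
            ((⊤ : SimpleGraph β).edgeFinset \ free))) \ insert s(f (par v), wk) client
          = insert s(f (par v), wo) (((⊤ : SimpleGraph β).edgeFinset \ free) \ client) := by
        ext e
        constructor
        · intro he
          rw [Finset.mem_sdiff, Finset.mem_insert, Finset.mem_insert, Finset.mem_insert] at he
          obtain ⟨h1, h2⟩ := he
          push_neg at h2
          rcases h1 with rfl | rfl | h1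
          · exact absurd rfl h2.1
          · exact Finset.mem_insert_self _ _
          · exact Finset.mem_insert_of_mem (Finset.mem_sdiff.mpr ⟨h1, h2.2⟩)
        · intro he
          rw [Finset.mem_insert] at he
          rcases he with rfl | he
          · refine Finset.mem_sdiff.mpr ⟨Finset.mem_insert_of_mem (Finset.mem_insert_self _ _), ?_⟩
            rw [Finset.mem_insert]
            push_neg
            exact ⟨fun h => hekeo h.symm, fun h => hclfree _ h heofree⟩
          · rw [Finset.mem_sdiff] at he
            refine Finset.mem_sdiff.mpr
              ⟨Finset.mem_insert_of_mem (Finset.mem_insert_of_mem he.1), ?_⟩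
            rw [Finset.mem_insert]
            push_neg
            exact ⟨fun h => hekcol (h ▸ he.1), he.2⟩
      have hfS' : ∀ x ∈ S, Function.update f v wk x = f x := fun x hx =>
        Function.update_of_ne (by rintro rfl; exact hvS hx) _ _
      have hf'v : Function.update f v wk v = wk := Function.update_self _ _ _
      have himg : (insert v S).image (Function.update f v wk) = insert wk (S.image f) := by
        rw [Finset.image_insert, hf'v]
        congr 1
        exact Finset.image_congr (fun x hx => hfS' x hx)
      refine ih (insert v S) (Function.update f v wk) (insert wo W)
        (free \ {s(f (par v), wk), s(f (par v), wo)}) (insert s(f (par v), wk) client)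
        ?_ ?_ ?_ ?_ ?_ ?_ ?_ ?_ ?_ ?_ ?_ ?_ ?_ ?_
      · exact hRS.trans (Finset.subset_insert _ _)
      · intro x hx hxR
        rcases Finset.mem_insert.mp hx with rfl | hxS
        · exact Finset.mem_insert_of_mem huS
        · exact Finset.mem_insert_of_mem (hcl x hxS hxR)
      · intro a ha b hb hab
        rw [Finset.coe_insert, Set.mem_insert_iff] at ha hb
        rcases ha with rfl | ha <;> rcases hb with rfl | hb
        · rfl
        · exfalso
          rw [hf'v, hfS' b hb] at hab
          apply hwkI
          rw [hab]
          exact Finset.mem_image_of_mem f hb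
        · exfalso
          rw [hf'v, hfS' a ha] at hab
          apply hwkI
          rw [← hab]
          exact Finset.mem_image_of_mem f ha
        · rw [hfS' a ha, hfS' b hb] at hab
          exact h3 ha hb hab
      · intro r hr
        rw [hfS' r (hRS hr)]
        exact h4 r hr
      · have hc1 := Finset.card_insert_le wo W
        rw [Finset.card_insert_of_notMem hvS]
        omega
      · intro w hw hmem
        rw [himg, Finset.mem_insert] at hmem
        rcases Finset.mem_insert.mp hw with rfl | hwW
        · rcases hmem with h | h
          · exact hkwo h.symm
          · exact hwoI h
        · rcases hmem with rfl | h
          · exact hwkW hwW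
          · exact h6 w hwW h
      · exact Finset.sdiff_subset.trans h7
      · intro e he x hx
        rw [hcol'] at he
        rw [himg]
        rcases Finset.mem_insert.mp he with rfl | he
        · rw [Sym2.mem_iff] at hx
          rcases hx with rfl | rfl
          · exact Finset.mem_union_left _ (Finset.mem_insert_of_mem hfu)
          · exact Finset.mem_union_left _ (Finset.mem_insert_self _ _)
        · rcases Finset.mem_insert.mp he with rfl | he
          · rw [Sym2.mem_iff] at hx
            rcases hx with rfl | rfl
            · exact Finset.mem_union_left _ (Finset.mem_insert_of_mem hfu)
            · exact Finset.mem_union_right _ (Finset.mem_insert_self _ _)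
          · have hm := h8 e he x hx
            rcases Finset.mem_union.mp hm with h | h
            · exact Finset.mem_union_left _ (Finset.mem_insert_of_mem h)
            · exact Finset.mem_union_right _ (Finset.mem_insert_of_mem h)
      · intro e he
        rcases Finset.mem_insert.mp he with rfl | he
        · refine Finset.mem_sdiff.mpr ⟨hekT, fun h => ?_⟩
          exact (Finset.mem_sdiff.mp h).2 (by simp)
        · have h' := h9 he
          rw [Finset.mem_sdiff] at h' ⊢
          exact ⟨h'.1, fun h => h'.2 ((Finset.mem_sdiff.mp h).1)⟩
      · intro x hx hxR
        rcases Finset.mem_insert.mp hx with hxv | hxS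
        · rw [hxv, hf'v, hfS' (par v) huS]
          exact Finset.mem_insert_self _ _
        · rw [hfS' x hxS, hfS' (par x) (hcl x hxS hxR)]
          exact Finset.mem_insert_of_mem (h10 x hxS hxR)
      · have hnonleaf : ¬(F.degree (par v) = 1 ∧ par v ∉ R) := by
          rintro ⟨hdeg, hpR⟩
          have ha1 : F.Adj (par v) (par (par v)) := (hparAdj (par v) hpR).symm
          have hne2 : par (par v) ≠ v := fun h => hvS (h ▸ hcl (par v) huS hpR)
          have hsub : ({par (par v), v} : Finset V) ⊆ F.neighborFinset (par v) := by
            intro y hy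
            rcases Finset.mem_insert.mp hy with rfl | hy
            · rw [SimpleGraph.mem_neighborFinset]; exact ha1
            · rw [Finset.mem_singleton] at hy
              subst hy
              rw [SimpleGraph.mem_neighborFinset]; exact huv
          have h2le : 2 ≤ F.degree (par v) := by
            have hc := Finset.card_le_card hsub
            rwa [Finset.card_pair hne2, SimpleGraph.card_neighborFinset_eq_degree] at hc
          omega
        intro e he
        rw [hcol'] at he
        rcases Finset.mem_insert.mp he with rfl | he
        · refine ⟨par v, Finset.mem_insert_of_mem huS, ?_, hnonleaf⟩
          rw [hfS' (par v) huS]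
          exact Sym2.mem_iff.mpr (Or.inl rfl)
        · rcases Finset.mem_insert.mp he with rfl | he
          · refine ⟨par v, Finset.mem_insert_of_mem huS, ?_, hnonleaf⟩
            rw [hfS' (par v) huS]
            exact Sym2.mem_iff.mpr (Or.inl rfl)
          · obtain ⟨u', hu'S, hm, hl⟩ := h11 e he
            refine ⟨u', Finset.mem_insert_of_mem hu'S, ?_, hl⟩
            rw [hfS' u' hu'S]
            exact hm
      · intro w hw
        rw [hcol', hblue']
        rw [himg, Finset.mem_insert] at hw
        push_neg at hw
        obtain ⟨hwwk, hwI⟩ := hw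
        by_cases hweo : w ∈ s(f (par v), wo)
        · have hwwo : w = wo := by
            rw [Sym2.mem_iff] at hweo
            rcases hweo with rfl | rfl
            · exact absurd hfu hwI
            · rfl
          subst hwwo
          rw [Finset.filter_insert, if_pos hweo]
          have hempty : (((⊤ : SimpleGraph β).edgeFinset \ free) \ client).filter
              (fun e => w ∈ e) = ∅ := by
            rw [Finset.filter_eq_empty_iff]
            intro e he hmem
            have he' : e ∈ (⊤ : SimpleGraph β).edgeFinset \ free := Finset.sdiff_subset he
            exact hwo (h8 e he' w hmem)
          rw [hempty]
          simp
        · rw [Finset.filter_insert, if_neg hweo]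
          exact h12 w hwI
      · intro x hx
        rw [hcol', hblue']
        rcases Finset.mem_insert.mp hx with hxv | hxS
        · rw [hxv, hf'v]
          have hwk_eo : wk ∉ s(f (par v), wo) := by
            rw [Sym2.mem_iff]
            push_neg
            exact ⟨fun h => hfuk h.symm, hkwo⟩
          rw [Finset.filter_insert, if_neg hwk_eo]
          have hempty : (((⊤ : SimpleGraph β).edgeFinset \ free) \ client).filter
              (fun e => wk ∈ e) = ∅ := by
            rw [Finset.filter_eq_empty_iff]
            intro e he hmem
            have he' : e ∈ (⊤ : SimpleGraph β).edgeFinset \ free := Finset.sdiff_subset he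
            exact hwk (h8 e he' wk hmem)
          rw [hempty, Finset.card_empty]
          have hsub : (Finset.univ.filter (fun y => y ∉ insert v S ∧ y ∉ R ∧ par y = v))
              ⊆ F.neighborFinset v := by
            intro y hy
            rw [Finset.mem_filter] at hy
            obtain ⟨-, -, hyR, hpy⟩ := hy
            rw [SimpleGraph.mem_neighborFinset]
            have hadj := hparAdj y hyR
            rw [hpy] at hadj
            exact hadj
          have := Finset.card_le_card hsub
          rw [SimpleGraph.card_neighborFinset_eq_degree] at this
          omega
        · rw [hfS' x hxS]
          by_cases hxu : x = par v
          · rw [hxu]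
            have hin : f (par v) ∈ s(f (par v), wo) := Sym2.mem_iff.mpr (Or.inl rfl)
            rw [Finset.filter_insert, if_pos hin]
            have heonb : s(f (par v), wo) ∉
                (((⊤ : SimpleGraph β).edgeFinset \ free) \ client).filter
                (fun e => f (par v) ∈ e) := by
              intro h
              exact heocol (Finset.sdiff_subset (Finset.mem_filter.mp h).1)
            rw [Finset.card_insert_of_notMem heonb]
            have hcs : Finset.univ.filter (fun y => y ∉ S ∧ y ∉ R ∧ par y = par v)
                = insert v (Finset.univ.filter
                    (fun y => y ∉ insert v S ∧ y ∉ R ∧ par y = par v)) := by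
              ext y
              rw [Finset.mem_insert, Finset.mem_filter, Finset.mem_filter]
              constructor
              · rintro ⟨hu, hy1, hy2, hy3⟩
                by_cases hyv : y = v
                · exact Or.inl hyv
                · refine Or.inr ⟨hu, ?_, hy2, hy3⟩
                  intro hc
                  rcases Finset.mem_insert.mp hc with h' | hc
                  · exact hyv h'
                  · exact hy1 hc
              · rintro (h' | ⟨hu, hy1, hy2, hy3⟩)
                · refine ⟨Finset.mem_univ y, ?_⟩
                  rw [h']
                  exact ⟨hvS, hvR, rfl⟩
                · exact ⟨hu, fun hc => hy1 (Finset.mem_insert_of_mem hc), hy2, hy3⟩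
            have hvnotin : v ∉ Finset.univ.filter
                (fun y => y ∉ insert v S ∧ y ∉ R ∧ par y = par v) := by
              intro h
              exact (Finset.mem_filter.mp h).2.1 (Finset.mem_insert_self v S)
            have h13' := h13 (par v) huS
            rw [hcs, Finset.card_insert_of_notMem hvnotin] at h13'
            omega
          · have hfneq : f x ∉ s(f (par v), wo) := by
              rw [Sym2.mem_iff]
              push_neg
              constructor
              · intro h
                exact hxu (h3 (Finset.mem_coe.mpr hxS) (Finset.mem_coe.mpr huS) h)
              · intro h
                apply hwoI
                rw [← h]
                exact Finset.mem_image_of_mem f hxS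
            rw [Finset.filter_insert, if_neg hfneq]
            have hcs : Finset.univ.filter (fun y => y ∉ insert v S ∧ y ∉ R ∧ par y = x)
                = Finset.univ.filter (fun y => y ∉ S ∧ y ∉ R ∧ par y = x) := by
              apply Finset.filter_congr
              intro y _
              constructor
              · rintro ⟨hy1, hy2, hy3⟩
                exact ⟨fun hc => hy1 (Finset.mem_insert_of_mem hc), hy2, hy3⟩
              · rintro ⟨hy1, hy2, hy3⟩
                refine ⟨?_, hy2, hy3⟩
                intro hc
                rcases Finset.mem_insert.mp hc with rfl | hc
                · exact hxu hy3.symm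
                · exact hy1 hc
            rw [hcs]
            exact h13 x hxS
      · have hset : Finset.univ \ insert v S = (Finset.univ \ S).erase v := by
          ext y
          rw [Finset.mem_erase, Finset.mem_sdiff, Finset.mem_sdiff, Finset.mem_insert]
          constructor
          · rintro ⟨h1, h2⟩
            push_neg at h2
            exact ⟨h2.1, h1, h2.2⟩
          · rintro ⟨h1, h2, h3p⟩
            exact ⟨h2, fun hc => hc.elim h1 h3p⟩
        rw [hset, Finset.card_erase_of_mem hv, hn]
        omega
    refine WaiterForcesIn.offer _ _ (hefree w1 hw1t) (hefree w2 hw2t) (hdist w1 w2 hw12)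
      (key w1 w2 hw1t hw2t hw12) ?_
    have hpair : ({s(f (par v), w1), s(f (par v), w2)} : Finset (Sym2 β))
        = {s(f (par v), w2), s(f (par v), w1)} := Finset.pair_comm _ _
    rw [hpair]
    exact key w2 w1 hw2t hw1t hw12.symm


/-- let `F` be a rooted forest (an acyclic graph with exactly one
designated root in each component) and let `B` be a complete graph on at least
`v(F) + e(F)` vertices, with distinct target vertices fixed for the roots.
Then Waiter can force, within at most `e(F)` rounds, a red copy of `F` in which
every root is mapped to its fixed target, every colored edge has an endpoint at
a non-leaf of the red copy (a leaf being a degree-1 non-root), and the blue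
edges between the copy and the remaining vertices form a star forest in which
each star is centered at a copy vertex `f u` and has at most `deg_F(u)` edges. -/
theorem stmt_9 {V β : Type*} [Fintype V] [Fintype β] [DecidableEq β]
    (F : SimpleGraph V) (hforest : F.IsAcyclic)
    (R : Finset V) (hroots : ∀ v : V, ∃! r : V, r ∈ R ∧ F.Reachable v r)
    (hboard : Fintype.card V + F.edgeFinset.card ≤ Fintype.card β)
    (g : V → β) (hg : Set.InjOn g (R : Set V)) :
    WaiterForcesIn
      (fun client free =>
        ∃ f : V ↪ β,
          -- red copy of F
          (∀ u v : V, F.Adj u v → s(f u, f v) ∈ client) ∧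
          -- roots go to their fixed targets
          (∀ r ∈ R, f r = g r) ∧
          -- every colored edge has an endpoint at a non-leaf of the copy
          (∀ e ∈ (⊤ : SimpleGraph β).edgeFinset \ free,
            ∃ u : V, f u ∈ e ∧ ¬(F.degree u = 1 ∧ u ∉ R)) ∧
          -- blue edges between the copy and the rest form a star forest:
          -- each outside vertex lies in at most one such blue edge ...
          (∀ w : β, w ∉ Set.range f →
            (((((⊤ : SimpleGraph β).edgeFinset \ free) \ client).filter
                (fun e => w ∈ e ∧ ∃ u : V, f u ∈ e)).card ≤ 1)) ∧
          -- ... and the star centered at `f u` has at most `deg_F(u)` edges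
          (∀ u : V,
            (((((⊤ : SimpleGraph β).edgeFinset \ free) \ client).filter
                (fun e => f u ∈ e ∧ ∃ w : β, w ∈ e ∧ w ∉ Set.range f)).card
              ≤ F.degree u)))
      F.edgeFinset.card ((⊤ : SimpleGraph β).edgeFinset) ∅ := by
  choose root hroot1 hroot2 using fun v => (hroots v).exists
  have hrootu : ∀ v r, r ∈ R → F.Reachable v r → r = root v :=
    fun v r h1 h2 => (hroots v).unique ⟨h1, h2⟩ ⟨hroot1 v, hroot2 v⟩
  have hrootSelf : ∀ v ∈ R, root v = v :=
    fun v hv => ((hroots v).unique ⟨hroot1 v, hroot2 v⟩ ⟨hv, Reachable.refl v⟩)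
  have hsame : ∀ a b, F.Adj a b → root a = root b := by
    intro a b h
    exact (hroots a).unique ⟨hroot1 a, hroot2 a⟩ ⟨hroot1 b, h.reachable.trans (hroot2 b)⟩
  set d : V → ℕ := fun v => F.dist v (root v) with hd
  have hd0 : ∀ v, d v = 0 ↔ v ∈ R := by
    intro v
    constructor
    · intro h
      have := ((hroot2 v).dist_eq_zero_iff).mp h
      rw [this]
      exact hroot1 v
    · intro h
      simp [hd, hrootSelf v h, SimpleGraph.dist_self]
  -- parent existence
  have hpar : ∀ v, v ∉ R → ∃ a, F.Adj a v ∧ d a + 1 = d v := by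
    intro v hvR
    have hvr : v ≠ root v := fun h => hvR (h ▸ hroot1 v)
    obtain ⟨p, hp, hlen⟩ := (hroot2 v).exists_path_of_dist
    have hnil : ¬p.Nil := SimpleGraph.Walk.not_nil_of_ne hvr
    have hadj : F.Adj v (p.getVert 1) := p.adj_snd hnil
    refine ⟨p.getVert 1, hadj.symm, ?_⟩
    have hrb : root (p.getVert 1) = root v :=
      (hroots (p.getVert 1)).unique ⟨hroot1 _, hroot2 _⟩
        ⟨hroot1 v, hadj.symm.reachable.trans (hroot2 v)⟩
    have hub : d (p.getVert 1) = F.dist (p.getVert 1) (root v) := by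
      simp only [hd]
      rw [hrb]
    have hupper : F.dist (p.getVert 1) (root v) ≤ p.tail.length := SimpleGraph.dist_le p.tail
    have htail : p.tail.length + 1 = p.length := SimpleGraph.Walk.length_tail_add_one hnil
    have hreachb : F.Reachable (p.getVert 1) (root v) :=
      hadj.symm.reachable.trans (hroot2 v)
    obtain ⟨q', hq'⟩ := hreachb.exists_walk_length_eq_dist
    have hlow : F.dist v (root v) ≤ q'.length + 1 := by
      have := SimpleGraph.dist_le (SimpleGraph.Walk.cons hadj q')
      rwa [SimpleGraph.Walk.length_cons] at this
    rw [hq'] at hlow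
    have hdv : d v = F.dist v (root v) := rfl
    omega
  choose par0 hpar1 hpar2 using hpar
  set par : V → V := fun v => if h : v ∈ R then v else par0 v h with hparDef
  have hparAdj : ∀ v ∉ R, F.Adj (par v) v := by
    intro v hv
    simp only [hparDef, dif_neg hv]
    exact hpar1 v hv
  have hparD : ∀ v ∉ R, d (par v) + 1 = d v := by
    intro v hv
    simp only [hparDef, dif_neg hv]
    exact hpar2 v hv
  have hdir : ∀ a b, F.Adj a b → d a + 1 = d b ∨ d b + 1 = d a := by
    intro a b hab
    have hr : root a = root b := hsame a b hab
    have h1 : F.Reachable a (root a) := hroot2 a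
    have h2 : F.Reachable b (root a) := by rw [hr]; exact hroot2 b
    have hcases := adj_dist_cases hforest hab h1 h2
    have hdb : d b = F.dist b (root a) := by simp only [hd]; rw [hr]
    have hda : d a = F.dist a (root a) := rfl
    rcases hcases with h | h
    · left; omega
    · right; omega
  have hparUniq : ∀ v ∉ R, ∀ a, F.Adj a v → d a + 1 = d v → a = par v := by
    intro v hv a hadj hda
    have hpadj := hparAdj v hv
    have hpd := hparD v hv
    have h1 : F.dist a (root v) = d a := by
      simp only [hd]; rw [← hsame a v hadj]
    have h2 : F.dist (par v) (root v) = d (par v) := by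
      simp only [hd]; rw [← hsame (par v) v hpadj]
    have h3 : F.dist v (root v) = d v := rfl
    exact parent_unique hforest hadj hpadj
      (hadj.reachable.trans (hroot2 v)) (hpadj.reachable.trans (hroot2 v))
      (by omega) (by omega)
  have hEcard : (Finset.univ \ R).card = F.edgeFinset.card := by
    apply Finset.card_bij (fun v _ => s(par v, v))
    · intro v hv
      rw [SimpleGraph.mem_edgeFinset, SimpleGraph.mem_edgeSet]
      exact hparAdj v (Finset.mem_sdiff.mp hv).2
    · intro a ha b hb heq
      rw [Sym2.eq_iff] at heq
      rcases heq with ⟨h1, h2⟩ | ⟨h1, h2⟩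
      · exact h2
      · have ha' := hparD a (Finset.mem_sdiff.mp ha).2
        have hb' := hparD b (Finset.mem_sdiff.mp hb).2
        rw [h1] at ha'
        rw [← h2] at hb'
        exfalso
        omega
    · intro e he
      induction e using Sym2.ind with
      | _ a b =>
        rw [SimpleGraph.mem_edgeFinset, SimpleGraph.mem_edgeSet] at he
        rcases hdir a b he with hc | hc
        · have hbR : b ∉ R := fun h => by have := (hd0 b).mpr h; omega
          have hpb : a = par b := hparUniq b hbR a he hc
          exact ⟨b, Finset.mem_sdiff.mpr ⟨Finset.mem_univ b, hbR⟩, by rw [← hpb]⟩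
        · have haR : a ∉ R := fun h => by have := (hd0 a).mpr h; omega
          have hpa : b = par a := hparUniq a haR b he.symm hc
          exact ⟨a, Finset.mem_sdiff.mpr ⟨Finset.mem_univ a, haR⟩, by
            rw [← hpa, Sym2.eq_swap]⟩
  have happly := mainGame F R g par d hd0 hparAdj hparD hparUniq hdir
    (by rw [hEcard]; exact hboard)
    F.edgeFinset.card R (fun v => g (root v)) ∅
    ((⊤ : SimpleGraph β).edgeFinset) ∅
    (Finset.Subset.refl R)
    (fun v hv hvR => absurd hv hvR)
    (by
      intro a ha b hb h
      simp only at h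
      rw [hrootSelf a ha, hrootSelf b hb] at h
      exact hg ha hb h)
    (by
      intro r hr
      show g (root r) = g r
      rw [hrootSelf r hr])
    (by simp)
    (fun w hw => absurd hw (Finset.notMem_empty w))
    (Finset.Subset.refl _)
    (by
      intro e he x hx
      rw [Finset.sdiff_self] at he
      exact absurd he (Finset.notMem_empty e))
    (Finset.empty_subset _)
    (fun v hv hvR => absurd hv hvR)
    (by
      intro e he
      rw [Finset.sdiff_self] at he
      exact absurd he (Finset.notMem_empty e))
    (by
      intro w hw
      rw [Finset.sdiff_self]
      simp)
    (by
      intro u hu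
      have hsub : (Finset.univ.filter (fun x => x ∉ R ∧ x ∉ R ∧ par x = u))
          ⊆ F.neighborFinset u := by
        intro y hy
        rw [Finset.mem_filter] at hy
        obtain ⟨-, -, hyR, hpy⟩ := hy
        rw [SimpleGraph.mem_neighborFinset]
        have hadj := hparAdj y hyR
        rw [hpy] at hadj
        exact hadj
      have hle := Finset.card_le_card hsub
      rw [SimpleGraph.card_neighborFinset_eq_degree] at hle
      simpa using hle)
    hEcard
  exact happly
end

section
/- Let n be large enough and let 𝓗 = (X, 𝓕) be a hypergraph with |X| = n, |𝓕| ≤ n^{log n}, and every hyperedge containing at least log³ n vertices. Then in the Waiter-Client game on 𝓗, Waiter has a strategy such that at the end of the game the set C of Client's elements satisfies |C ∩ f| ≥ |f|/100 for every f ∈ 𝓕. -/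
open scoped Classical

/-- `WaiterForcesEnd goal free client`: in the unbiased Waiter-Client game with
unclaimed set `free` and Client's set `client`, Waiter can guarantee, against
any play of Client, that at the end of the game (when at most one unclaimed
element remains, and it goes to Waiter) `goal` holds for Client's final set. -/
inductive WaiterForcesEnd {α : Type} [DecidableEq α]
    (goal : Finset α → Prop) : Finset α → Finset α → Prop
  | win {free client : Finset α} :
      free.card ≤ 1 → goal client → WaiterForcesEnd goal free client
  | offer {free client : Finset α} (e₁ e₂ : α)
      (h₁ : e₁ ∈ free) (h₂ : e₂ ∈ free) (hne : e₁ ≠ e₂)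
      (hc₁ : WaiterForcesEnd goal (free \ {e₁, e₂}) (insert e₁ client))
      (hc₂ : WaiterForcesEnd goal (free \ {e₁, e₂}) (insert e₂ client)) :
      WaiterForcesEnd goal free client

noncomputable def wcePot {X : Type} [DecidableEq X] (G : Finset (Finset X))
    (free client s : Finset X) : ℝ :=
  ∑ F ∈ G, if F ∩ client = ∅ ∧ s ⊆ F then (2⁻¹ : ℝ) ^ (F ∩ free).card else 0

lemma wcePot_nonneg {X : Type} [DecidableEq X] (G : Finset (Finset X))
    (free client s : Finset X) : 0 ≤ wcePot G free client s :=
  Finset.sum_nonneg fun F _ => by split <;> positivity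

lemma wcePot_mono {X : Type} [DecidableEq X] (G : Finset (Finset X))
    (free client : Finset X) {s s' : Finset X} (h : s ⊆ s') :
    wcePot G free client s' ≤ wcePot G free client s := by
  refine Finset.sum_le_sum fun F _ => ?_
  by_cases h' : F ∩ client = ∅ ∧ s' ⊆ F
  · rw [if_pos h', if_pos ⟨h'.1, h.trans h'.2⟩]
  · rw [if_neg h']; split <;> positivity

lemma wce_inter_insert_empty {X : Type} [DecidableEq X] {F client : Finset X} {c : X} :
    F ∩ insert c client = ∅ ↔ c ∉ F ∧ F ∩ client = ∅ := by
  constructor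
  · intro h
    have h' := Finset.eq_empty_iff_forall_notMem.mp h
    refine ⟨fun hc => h' c (Finset.mem_inter.mpr ⟨hc, Finset.mem_insert_self c client⟩), ?_⟩
    refine Finset.eq_empty_iff_forall_notMem.mpr fun x hx => ?_
    obtain ⟨h1, h2⟩ := Finset.mem_inter.mp hx
    exact h' x (Finset.mem_inter.mpr ⟨h1, Finset.mem_insert_of_mem h2⟩)
  · rintro ⟨hc, hemp⟩
    refine Finset.eq_empty_iff_forall_notMem.mpr fun x hx => ?_
    obtain ⟨h1, h2⟩ := Finset.mem_inter.mp hx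
    rcases Finset.mem_insert.mp h2 with rfl | h2
    · exact hc h1
    · exact Finset.eq_empty_iff_forall_notMem.mp hemp x (Finset.mem_inter.mpr ⟨h1, h2⟩)

lemma wcePot_update {X : Type} [DecidableEq X] (G : Finset (Finset X))
    (free client : Finset X) {c d : X} (hd : d ∈ free) (s : Finset X) :
    wcePot G (free \ {c, d}) (insert c client) s
      = wcePot G free client s - wcePot G free client (insert c s)
        + (wcePot G free client (insert d s) - wcePot G free client (insert c (insert d s))) := by
  unfold wcePot
  rw [← Finset.sum_sub_distrib, ← Finset.sum_sub_distrib, ← Finset.sum_add_distrib]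
  refine Finset.sum_congr rfl fun F _ => ?_
  simp only [wce_inter_insert_empty, Finset.insert_subset_iff]
  by_cases hcF : c ∈ F <;> by_cases hdF : d ∈ F <;>
    by_cases hA : F ∩ client = ∅ <;> by_cases hs : s ⊆ F <;>
      simp only [hcF, hdF, hA, hs, true_and, false_and, and_true, and_false, not_true, not_false_iff,
        if_true, if_false, sub_zero, zero_sub, add_zero, zero_add, sub_self, neg_zero, if_neg,
        not_false_eq_true, ite_true, ite_false]
  · -- c ∉ F, d ∈ F, A, s
    have hmem : d ∈ F ∩ free := Finset.mem_inter.mpr ⟨hdF, hd⟩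
    have hset : F ∩ (free \ {c, d}) = (F ∩ free).erase d := by
      ext a
      simp only [Finset.mem_inter, Finset.mem_sdiff, Finset.mem_insert, Finset.mem_erase,
        Finset.mem_singleton, not_or]
      constructor
      · rintro ⟨haF, hafree, -, had⟩; exact ⟨had, haF, hafree⟩
      · rintro ⟨had, haF, hafree⟩; exact ⟨haF, hafree, fun he => hcF (he ▸ haF), had⟩
    have hpos : 0 < (F ∩ free).card := Finset.card_pos.mpr ⟨d, hmem⟩
    have hcard : (F ∩ free).card = (F ∩ (free \ {c, d})).card + 1 := by
      rw [hset, Finset.card_erase_of_mem hmem]; omega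
    rw [hcard, pow_succ]; ring
  · -- c ∉ F, d ∉ F, A, s
    have hset : F ∩ (free \ {c, d}) = F ∩ free := by
      ext a
      simp only [Finset.mem_inter, Finset.mem_sdiff, Finset.mem_insert, Finset.mem_singleton,
        not_or]
      constructor
      · rintro ⟨haF, hafree, -, -⟩; exact ⟨haF, hafree⟩
      · rintro ⟨haF, hafree⟩
        exact ⟨haF, hafree, fun he => hcF (he ▸ haF), fun he => hdF (he ▸ haF)⟩
    rw [hset]


theorem wce_game {X : Type} [DecidableEq X] (G : Finset (Finset X)) (goal : Finset X → Prop)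
    (hgoal : ∀ C : Finset X, (∀ F ∈ G, (F ∩ C).Nonempty) → goal C) (free : Finset X) :
    ∀ client : Finset X,
      wcePot G free client ∅ < 1 →
      (∀ z ∈ free, wcePot G free client ∅ + wcePot G free client {z} < 1) →
      WaiterForcesEnd goal free client := by
  induction free using Finset.strongInduction with
  | _ free ih =>
  intro client h1 h2
  by_cases hcard : free.card ≤ 1
  · refine WaiterForcesEnd.win hcard (hgoal _ ?_)
    intro F hF
    by_contra hne
    have hFc : F ∩ client = ∅ := Finset.not_nonempty_iff_eq_empty.mp hne
    have hterm : ∀ s : Finset X, s ⊆ F →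
        (2⁻¹ : ℝ) ^ (F ∩ free).card ≤ wcePot G free client s := by
      intro s hs
      have h := Finset.single_le_sum
        (f := fun H => if H ∩ client = ∅ ∧ s ⊆ H then (2⁻¹ : ℝ) ^ (H ∩ free).card else 0)
        (fun H _ => by split <;> positivity) hF
      rw [if_pos ⟨hFc, hs⟩] at h
      exact h
    have hl : (F ∩ free).card ≤ 1 :=
      le_trans (Finset.card_le_card Finset.inter_subset_right) hcard
    rcases Nat.le_one_iff_eq_zero_or_eq_one.mp hl with h0 | h1'
    · have hm := hterm ∅ (Finset.empty_subset F)
      rw [h0, pow_zero] at hm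
      linarith
    · obtain ⟨z, hz⟩ := Finset.card_eq_one.mp h1'
      have hzm : z ∈ F ∩ free := hz ▸ Finset.mem_singleton_self z
      have hzF : z ∈ F := (Finset.mem_inter.mp hzm).1
      have hzfree : z ∈ free := (Finset.mem_inter.mp hzm).2
      have t1 := hterm ∅ (Finset.empty_subset F)
      have t2 := hterm {z} (Finset.singleton_subset_iff.mpr hzF)
      rw [h1', pow_one] at t1 t2
      have := h2 z hzfree
      linarith
  · push_neg at hcard
    obtain ⟨u, hu, v, hv, huv⟩ := Finset.one_lt_card.mp hcard
    obtain ⟨p, hp, hmax⟩ := Finset.exists_max_image free.offDiag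
      (fun p => wcePot G free client {p.1} + wcePot G free client {p.2}
        + wcePot G free client (insert p.1 {p.2}))
      ⟨(u, v), Finset.mem_offDiag.mpr ⟨hu, hv, huv⟩⟩
    obtain ⟨hp1, hp2, hp12⟩ := Finset.mem_offDiag.mp hp
    have key : ∀ c d : X, c ∈ free → d ∈ free → c ≠ d →
        (∀ z ∈ free, z ≠ c → z ≠ d →
          wcePot G free client {z} + wcePot G free client (insert d {z})
            ≤ wcePot G free client {c} + wcePot G free client (insert c {d})) →
        WaiterForcesEnd goal (free \ {c, d}) (insert c client) := by
      intro c d hc hd hcd hkey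
      have hsub : ({c, d} : Finset X) ⊆ free := by
        intro x hx
        rcases Finset.mem_insert.mp hx with rfl | hx
        · exact hc
        · exact (Finset.mem_singleton.mp hx) ▸ hd
      have hssub : free \ {c, d} ⊂ free := Finset.sdiff_ssubset hsub ⟨c, Finset.mem_insert_self c _⟩
      have hupd0 := wcePot_update G free client (c := c) hd ∅
      simp only [insert_empty_eq] at hupd0
      have n1 := wcePot_nonneg G free client {c}
      have n2 := wcePot_nonneg G free client (insert c {d})
      have hd2 := h2 d hd
      refine ih _ hssub (insert c client) ?_ ?_
      · rw [hupd0]; linarith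
      · intro z hz
        obtain ⟨hzfree, hzcd⟩ := Finset.mem_sdiff.mp hz
        have hzc : z ≠ c := fun h => hzcd (by rw [h]; exact Finset.mem_insert_self _ _)
        have hzd : z ≠ d := fun h => hzcd (by rw [h]; exact Finset.mem_insert_of_mem (Finset.mem_singleton_self d))
        have hupdz := wcePot_update G free client (c := c) hd {z}
        have hk := hkey z hzfree hzc hzd
        have n3 := wcePot_nonneg G free client (insert c {z})
        have n4 := wcePot_nonneg G free client (insert c (insert d {z}))
        rw [hupd0, hupdz]
        linarith
    refine WaiterForcesEnd.offer p.1 p.2 hp1 hp2 hp12 ?_ ?_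
    · refine key p.1 p.2 hp1 hp2 hp12 ?_
      intro z hzfree hz1 hz2
      have hm := hmax (p.2, z) (Finset.mem_offDiag.mpr ⟨hp2, hzfree, Ne.symm hz2⟩)
      simp only at hm
      linarith
    · have hpair : ({p.2, p.1} : Finset X) = {p.1, p.2} := Finset.pair_comm p.2 p.1
      rw [show free \ {p.1, p.2} = free \ {p.2, p.1} by rw [hpair]]
      refine key p.2 p.1 hp2 hp1 (Ne.symm hp12) ?_
      intro z hzfree hz2 hz1
      have hm := hmax (p.1, z) (Finset.mem_offDiag.mpr ⟨hp1, hzfree, Ne.symm hz1⟩)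
      simp only at hm
      have hins : (insert p.2 ({p.1} : Finset X)) = insert p.1 ({p.2} : Finset X) :=
        Finset.pair_comm p.2 p.1
      rw [hins]
      linarith

lemma wce_sum_biUnion_le {β γ : Type*} [DecidableEq β] [DecidableEq γ] {s : Finset β}
    {g : β → Finset γ} {w : γ → ℝ} (hw : ∀ x, 0 ≤ w x) :
    ∑ x ∈ s.biUnion g, w x ≤ ∑ b ∈ s, ∑ x ∈ g b, w x := by
  induction s using Finset.induction with
  | empty => simp
  | @insert a s ha ih =>
    rw [Finset.biUnion_insert, Finset.sum_insert ha]
    calc ∑ x ∈ g a ∪ s.biUnion g, w x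
        ≤ ∑ x ∈ g a, w x + ∑ x ∈ s.biUnion g, w x := by
          rw [← Finset.union_sdiff_self_eq_union, Finset.sum_union Finset.disjoint_sdiff]
          exact add_le_add_right
            (Finset.sum_le_sum_of_subset_of_nonneg Finset.sdiff_subset (fun x _ _ => hw x)) _
      _ ≤ ∑ x ∈ g a, w x + ∑ b ∈ s, ∑ x ∈ g b, w x := add_le_add_right ih _

lemma wce_sum_image_le {β γ : Type*} [DecidableEq β] [DecidableEq γ] {s : Finset β} {g : β → γ}
    {w : γ → ℝ} (hw : ∀ x, 0 ≤ w x) : ∑ y ∈ s.image g, w y ≤ ∑ x ∈ s, w (g x) := by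
  rw [← Finset.biUnion_singleton]
  refine le_trans (wce_sum_biUnion_le hw) ?_
  simp

lemma wce_choose_bound (m : ℕ) :
    (m.choose (m / 100) : ℝ) * (2⁻¹ : ℝ) ^ (m - m / 100) ≤ Real.exp (-(1/2)) ^ m := by
  set k := m / 100 with hk
  have hkm : k ≤ m := Nat.div_le_self m 100
  have hbin : (m.choose k : ℝ) * (1 / 100 : ℝ) ^ k ≤ (1 + 1/100 : ℝ) ^ m := by
    have hexp : ((1:ℝ)/100 + 1) ^ m
        = ∑ j ∈ Finset.range (m + 1), ((1:ℝ)/100) ^ j * 1 ^ (m - j) * (m.choose j) :=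
      add_pow _ _ _
    have hle : ((1:ℝ)/100) ^ k * 1 ^ (m - k) * (m.choose k)
        ≤ ∑ j ∈ Finset.range (m + 1), ((1:ℝ)/100) ^ j * 1 ^ (m - j) * (m.choose j) :=
      Finset.single_le_sum (f := fun j => ((1:ℝ)/100) ^ j * 1 ^ (m - j) * (m.choose j))
        (fun j _ => by positivity) (Finset.mem_range.mpr (Nat.lt_succ_of_le hkm))
    calc (m.choose k : ℝ) * (1/100) ^ k = ((1:ℝ)/100) ^ k * 1 ^ (m - k) * (m.choose k) := by
          rw [one_pow]; ring
      _ ≤ ((1:ℝ)/100 + 1) ^ m := hexp ▸ hle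
      _ = (1 + 1/100 : ℝ) ^ m := by norm_num
  have hchoose : (m.choose k : ℝ) ≤ (1.01 : ℝ) ^ m * 100 ^ k := by
    have h1 : (m.choose k : ℝ) = ((m.choose k : ℝ) * (1/100) ^ k) * 100 ^ k := by
      rw [mul_assoc, ← mul_pow]; norm_num
    rw [h1]
    calc ((m.choose k : ℝ) * (1/100) ^ k) * 100 ^ k ≤ (1 + 1/100 : ℝ) ^ m * 100 ^ k :=
        mul_le_mul_of_nonneg_right hbin (by positivity)
      _ = (1.01 : ℝ) ^ m * 100 ^ k := by norm_num
  have hq : (2⁻¹ : ℝ) ^ (m - k) = (2⁻¹ : ℝ) ^ m * 2 ^ k := by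
    rw [pow_sub₀ _ (by norm_num : (2⁻¹:ℝ) ≠ 0) hkm, ← inv_pow, inv_inv]
  have h200 : (200 : ℝ) ≤ (1.06 : ℝ) ^ (100 : ℕ) := by norm_num
  have h100k : 100 * k ≤ m := by
    have := Nat.div_mul_le_self m 100
    omega
  have h200k : (200 : ℝ) ^ k ≤ (1.06 : ℝ) ^ m := by
    calc (200 : ℝ) ^ k ≤ ((1.06 : ℝ) ^ (100 : ℕ)) ^ k := pow_le_pow_left₀ (by norm_num) h200 k
      _ = (1.06 : ℝ) ^ (100 * k) := by rw [← pow_mul]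
      _ ≤ (1.06 : ℝ) ^ m := pow_le_pow_right₀ (by norm_num) h100k
  have hrho : (1.01 * 2⁻¹ * 1.06 : ℝ) ≤ Real.exp (-(1/2)) := by
    have hhalf : Real.exp (1/2) * Real.exp (1/2) = Real.exp 1 := by
      rw [← Real.exp_add]; norm_num
    have he1 : Real.exp 1 < 2.7182818286 := Real.exp_one_lt_d9
    have hp : (0:ℝ) < Real.exp (1/2) := Real.exp_pos _
    have he : Real.exp (1/2) ≤ 1.649 := by nlinarith
    have h3 : (1.01 * 2⁻¹ * 1.06 : ℝ) * Real.exp (1/2) ≤ 1 := by nlinarith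
    rw [Real.exp_neg]
    calc (1.01 * 2⁻¹ * 1.06 : ℝ)
        = (1.01 * 2⁻¹ * 1.06 : ℝ) * Real.exp (1/2) * (Real.exp (1/2))⁻¹ := by field_simp
      _ ≤ 1 * (Real.exp (1/2))⁻¹ := mul_le_mul_of_nonneg_right h3 (by positivity)
      _ = (Real.exp (1/2))⁻¹ := one_mul _
  calc (m.choose k : ℝ) * (2⁻¹ : ℝ) ^ (m - k)
      ≤ ((1.01 : ℝ) ^ m * 100 ^ k) * ((2⁻¹ : ℝ) ^ m * 2 ^ k) := by
        rw [hq]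
        exact mul_le_mul hchoose le_rfl (by positivity) (by positivity)
    _ = ((1.01 : ℝ) * 2⁻¹) ^ m * (100 * 2 : ℝ) ^ k := by rw [mul_pow, mul_pow]; ring
    _ = ((1.01 : ℝ) * 2⁻¹) ^ m * (200 : ℝ) ^ k := by norm_num
    _ ≤ ((1.01 : ℝ) * 2⁻¹) ^ m * (1.06 : ℝ) ^ m := mul_le_mul_of_nonneg_left h200k (by positivity)
    _ = (1.01 * 2⁻¹ * 1.06 : ℝ) ^ m := by rw [← mul_pow]
    _ ≤ Real.exp (-(1/2)) ^ m := pow_le_pow_left₀ (by norm_num) hrho m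

/-- for `n` large enough, for every hypergraph `𝓗 = (X, 𝓕)` with
`|X| = n`, `|𝓕| ≤ n^{log n}`, and every hyperedge of size at least `log³ n`, in
the Waiter-Client game on `𝓗` Waiter has a strategy so that at the end of the
game Client's set `C` satisfies `|C ∩ f| ≥ |f|/100` for all `f ∈ 𝓕`. -/
theorem stmt_13 :
    ∃ n₀ : ℕ, ∀ n : ℕ, n₀ ≤ n →
      ∀ (X : Type) [Fintype X] [DecidableEq X] (𝓕 : Finset (Finset X)),
        Fintype.card X = n →
        (𝓕.card : ℝ) ≤ (n : ℝ) ^ (Real.log n) →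
        (∀ f ∈ 𝓕, (Real.log n) ^ 3 ≤ (f.card : ℝ)) →
        WaiterForcesEnd
          (fun client => ∀ f ∈ 𝓕, (f.card : ℝ) / 100 ≤ ((client ∩ f).card : ℝ))
          (Finset.univ : Finset X) ∅ := by
  refine ⟨100, fun n hn X _ _ 𝓕 _ hFcard hFsize => ?_⟩
  set G : Finset (Finset X) :=
    𝓕.biUnion (fun f => (f.powersetCard (f.card / 100)).image (fun A => f \ A)) with hG
  have hn100 : (100:ℝ) ≤ (n:ℝ) := by exact_mod_cast hn
  have hnpos : (0:ℝ) < (n:ℝ) := by linarith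
  have hL3 : (3:ℝ) ≤ Real.log n := by
    rw [Real.le_log_iff_exp_le hnpos]
    have h3 : Real.exp 3 = Real.exp 1 ^ (3:ℕ) := by
      rw [← Real.exp_nat_mul]; norm_num
    have hcube : Real.exp 1 ^ (3:ℕ) < (2.7182818286:ℝ) ^ (3:ℕ) :=
      pow_lt_pow_left₀ Real.exp_one_lt_d9 (le_of_lt (Real.exp_pos 1)) (by norm_num)
    have hval : (2.7182818286:ℝ) ^ (3:ℕ) < 100 := by norm_num
    linarith [h3 ▸ hcube]
  have hpot : wcePot G Finset.univ ∅ ∅ < 2⁻¹ := by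
    have h0 : wcePot G Finset.univ ∅ ∅ = ∑ F ∈ G, (2⁻¹:ℝ) ^ F.card := by
      unfold wcePot
      refine Finset.sum_congr rfl fun F _ => ?_
      rw [if_pos ⟨Finset.inter_empty F, Finset.empty_subset F⟩, Finset.inter_univ]
    rw [h0, hG]
    calc ∑ F ∈ 𝓕.biUnion (fun f => (f.powersetCard (f.card / 100)).image (fun A => f \ A)),
          (2⁻¹:ℝ) ^ F.card
        ≤ ∑ f ∈ 𝓕, ∑ F ∈ (f.powersetCard (f.card / 100)).image (fun A => f \ A),
            (2⁻¹:ℝ) ^ F.card :=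
          wce_sum_biUnion_le (fun F => by positivity)
      _ ≤ ∑ f ∈ 𝓕, ∑ A ∈ f.powersetCard (f.card / 100), (2⁻¹:ℝ) ^ ((f \ A).card) :=
          Finset.sum_le_sum fun f _ => wce_sum_image_le (fun F => by positivity)
      _ ≤ ∑ f ∈ 𝓕, Real.exp ((Real.log n) ^ 3 * -(1/2)) := by
          refine Finset.sum_le_sum fun f hf => ?_
          have hterm : ∀ A ∈ f.powersetCard (f.card / 100),
              (2⁻¹:ℝ) ^ ((f \ A).card) = (2⁻¹:ℝ) ^ (f.card - f.card / 100) := by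
            intro A hA
            obtain ⟨hsub, hAc⟩ := Finset.mem_powersetCard.mp hA
            rw [Finset.card_sdiff_of_subset hsub, hAc]
          rw [Finset.sum_congr rfl hterm, Finset.sum_const, Finset.card_powersetCard,
            nsmul_eq_mul]
          calc (f.card.choose (f.card / 100) : ℝ) * (2⁻¹:ℝ) ^ (f.card - f.card / 100)
              ≤ Real.exp (-(1/2)) ^ f.card := wce_choose_bound f.card
            _ = Real.exp ((f.card : ℝ) * -(1/2)) := by
                rw [← Real.exp_nat_mul]
            _ ≤ Real.exp ((Real.log n) ^ 3 * -(1/2)) := by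
                apply Real.exp_le_exp.mpr
                have := hFsize f hf
                linarith
      _ = (𝓕.card : ℝ) * Real.exp ((Real.log n) ^ 3 * -(1/2)) := by
          rw [Finset.sum_const, nsmul_eq_mul]
      _ ≤ (n:ℝ) ^ (Real.log n) * Real.exp ((Real.log n) ^ 3 * -(1/2)) :=
          mul_le_mul_of_nonneg_right hFcard (Real.exp_nonneg _)
      _ = Real.exp (Real.log n * Real.log n + (Real.log n) ^ 3 * -(1/2)) := by
          rw [Real.rpow_def_of_pos hnpos, ← Real.exp_add]
      _ ≤ Real.exp (-1) := by
          apply Real.exp_le_exp.mpr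
          nlinarith [hL3, sq_nonneg (Real.log n - 3),
            mul_nonneg (sub_nonneg.mpr hL3) (sq_nonneg (Real.log n))]
      _ < 2⁻¹ := by
          rw [Real.exp_neg]
          have hep : (0:ℝ) < Real.exp 1 := Real.exp_pos 1
          have h2e : (2:ℝ) < Real.exp 1 := by nlinarith [Real.exp_one_gt_d9]
          nlinarith [mul_pos (inv_pos.mpr hep) (sub_pos.mpr h2e),
            mul_inv_cancel₀ (ne_of_gt hep)]
  refine wce_game G _ ?_ Finset.univ ∅ (by linarith) ?_
  · intro C hC f hf
    by_contra hlt
    push_neg at hlt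
    have hck : (C ∩ f).card * 100 < f.card := by
      have h1 : ((C ∩ f).card : ℝ) * 100 < (f.card : ℝ) := by nlinarith
      exact_mod_cast h1
    have hle : (C ∩ f).card ≤ f.card / 100 :=
      (Nat.le_div_iff_mul_le (by norm_num)).mpr (le_of_lt hck)
    obtain ⟨A, hCA, hAf, hAcard⟩ := Finset.exists_subsuperset_card_eq
      (Finset.inter_subset_right : C ∩ f ⊆ f) hle (Nat.div_le_self _ _)
    have hFG : f \ A ∈ G := by
      rw [hG]
      exact Finset.mem_biUnion.mpr ⟨f, hf, Finset.mem_image.mpr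
        ⟨A, Finset.mem_powersetCard.mpr ⟨hAf, hAcard⟩, rfl⟩⟩
    obtain ⟨x, hx⟩ := hC (f \ A) hFG
    obtain ⟨hx1, hx2⟩ := Finset.mem_inter.mp hx
    obtain ⟨hxf, hxA⟩ := Finset.mem_sdiff.mp hx1
    exact hxA (hCA (Finset.mem_inter.mpr ⟨hx2, hxf⟩))
  · intro z _
    have := wcePot_mono G Finset.univ ∅ (Finset.empty_subset {z})
    linarith
end
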